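/- arXiv:2006.07799 — 2 statements merged into one kernel-verified Lean document; each statement's English description precedes it below -/
import Mathlib

section
/- Let l, r ≥ 0 be integers with r + 1 ≤ l ≤ r + 2 and l ≥ 2, and let λ₀ be as in the context. Then for every μ_c > 0 there exists θ₀ > 0 such that for all θ with 0 < |θ| < θ₀, |1 + μ_c·λ₀(e^{iθ})| > 1. (Hence the forward Euler method combined with this spatial discretization of the advection equation, run at fixed Courant number μ_c = δt/h, is unstable in the limit h → 0.) -/
/-- Optimal finite-difference coefficients for the first derivative on the
stencil `{-l, …, r}`. -/
noncomputable def aCoef (l r : ℕ) (k : ℤ) : ℝ :=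
  if k = 0 then
    -∑ ν ∈ (Finset.Icc (-(l : ℤ)) (r : ℤ)).erase 0, (1 : ℝ) / (ν : ℝ)
  else
    -((-1 : ℝ) ^ k / (k : ℝ)) *
      ((Nat.factorial l * Nat.factorial r : ℕ) : ℝ) /
      ((Nat.factorial ((l : ℤ) + k).toNat * Nat.factorial ((r : ℤ) - k).toNat : ℕ) : ℝ)

/-- The symbol `λ₀(s) = -Σ_{k=-l}^{r} a_k s^k` of the advection discretization. -/
noncomputable def lam0 (l r : ℕ) (s : ℂ) : ℂ :=
  -∑ k ∈ Finset.Icc (-(l : ℤ)) (r : ℤ), (aCoef l r k : ℂ) * s ^ k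

open Finset

/-- Harmonic numbers as reals. -/
noncomputable def Hr (n : ℕ) : ℝ := ∑ i ∈ range n, 1/((i:ℝ)+1)

lemma Hr_succ (n : ℕ) : Hr (n+1) = Hr n + 1/((n:ℝ)+1) := by
  simp [Hr, Finset.sum_range_succ]

lemma neg_one_sq_pow (l : ℕ) : ((-1:ℝ)^l) * ((-1:ℝ)^l) = 1 := by
  rw [← pow_add, ← two_mul, pow_mul]; norm_num

lemma neg_one_zpow_sub (j l : ℕ) : (-1:ℝ)^((j:ℤ) - l) = (-1:ℝ)^j * (-1:ℝ)^l := by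
  have h : (-1:ℝ)^((j:ℤ)-l) * (-1:ℝ)^(l:ℤ) = (-1:ℝ)^(j:ℤ) := by
    rw [← zpow_add₀ (by norm_num : (-1:ℝ) ≠ 0)]; congr 1; ring
  rw [zpow_natCast, zpow_natCast] at h
  calc (-1:ℝ)^((j:ℤ)-l) = (-1:ℝ)^((j:ℤ)-l) * (((-1:ℝ)^l) * ((-1:ℝ)^l)) := by
        rw [neg_one_sq_pow]; ring
    _ = ((-1:ℝ)^((j:ℤ)-l) * (-1:ℝ)^l) * (-1:ℝ)^l := by ring
    _ = (-1:ℝ)^j * (-1:ℝ)^l := by rw [h]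

lemma alt0 (n : ℕ) (hn : 1 ≤ n) :
    ∑ j ∈ range (n+1), (-1:ℝ)^j * (n.choose j) = 0 := by
  have h := Int.alternating_sum_range_choose (n := n)
  rw [if_neg (by omega)] at h
  have h2 : ((∑ m ∈ range (n+1), (-1:ℤ)^m * n.choose m : ℤ) : ℝ) = 0 := by
    rw [h]; norm_num
  push_cast at h2
  exact h2

lemma alt1 (n : ℕ) (hn : 2 ≤ n) :
    ∑ j ∈ range (n+1), (-1:ℝ)^j * j * (n.choose j) = 0 := by
  obtain ⟨m, rfl⟩ : ∃ m, n = m + 1 := ⟨n-1, by omega⟩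
  rw [Finset.sum_range_succ' (fun (j:ℕ) => (-1:ℝ)^j * (j:ℝ) * (((m+1).choose j : ℕ):ℝ)) (m+1)]
  have step : ∀ i ∈ range (m+1), (fun (j:ℕ) => (-1:ℝ)^j * (j:ℝ) * (((m+1).choose j : ℕ):ℝ)) (i+1)
      = (-((m:ℝ)+1)) * ((-1:ℝ)^i * (m.choose i)) := by
    intro i _
    have hk : ((i:ℝ)+1) * (((m+1).choose (i+1) : ℕ):ℝ) = ((m:ℝ)+1) * ((m.choose i : ℕ):ℝ) := by
      have h2 : ((m.succ * m.choose i : ℕ) : ℝ) = ((m.succ.choose i.succ * i.succ : ℕ) : ℝ) := by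
        rw [show m.succ * m.choose i = _ from Nat.add_one_mul_choose_eq m i]
      push_cast at h2
      linarith [h2]
    simp only []
    push_cast
    linear_combination (-(-1:ℝ)^i) * hk
  rw [Finset.sum_congr rfl step, ← Finset.mul_sum, alt0 m (by omega)]
  simp

lemma altinv (n : ℕ) :
    ∑ i ∈ range (n+1), (-1:ℝ)^i * (n.choose i) / ((i:ℝ)+1) = 1/((n:ℝ)+1) := by
  have key : ∀ i : ℕ, ((n.choose i : ℝ)) / ((i:ℝ)+1) = ((n+1).choose (i+1)) / ((n:ℝ)+1) := by
    intro i
    have : n.succ * n.choose i = n.succ.choose i.succ * i.succ := Nat.add_one_mul_choose_eq n i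
    have h2 : ((n.succ * n.choose i : ℕ) : ℝ) = ((n.succ.choose i.succ * i.succ : ℕ) : ℝ) := by
      rw [this]
    push_cast at h2
    rw [div_eq_div_iff (by positivity) (by positivity)]
    nlinarith [h2]
  have h1 : ∑ i ∈ range (n+1), (-1:ℝ)^i * (n.choose i) / ((i:ℝ)+1)
      = (1/((n:ℝ)+1)) * ∑ i ∈ range (n+1), (-1:ℝ)^i * ((n+1).choose (i+1)) := by
    rw [Finset.mul_sum]
    apply Finset.sum_congr rfl
    intro i _
    rw [mul_div_assoc, key i]
    ring
  have h2 : ∑ i ∈ range (n+1), (-1:ℝ)^i * (((n+1).choose (i+1)) : ℝ) = 1 := by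
    have h3 := alt0 (n+1) (by omega)
    rw [Finset.sum_range_succ'] at h3
    simp only [pow_succ] at h3
    have : ∑ i ∈ range (n+1), (-1:ℝ)^i * (-1) * ((n+1).choose (i+1))
        = - ∑ i ∈ range (n+1), (-1:ℝ)^i * ((n+1).choose (i+1)) := by
      rw [← Finset.sum_neg_distrib]
      apply Finset.sum_congr rfl; intro i _; ring
    rw [this] at h3
    simp at h3
    linarith [h3]
  rw [h1, h2, mul_one]
/-- The regularized sum `S(n,l) = Σ_j (-1)^j C(n,j)/(j-l)` (the `j = l` term
is zero by division-by-zero convention). -/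
noncomputable def Sa (n l : ℕ) : ℝ :=
  ∑ j ∈ range (n+1), (-1:ℝ)^j * (n.choose j) / ((j:ℝ) - l)

lemma Sa_zero (n : ℕ) : Sa n 0 = -Hr n := by
  induction n with
  | zero => simp [Sa, Hr]
  | succ n ih =>
    have expand : Sa (n+1) 0
        = ∑ i ∈ range (n+1), (-1:ℝ)^(i+1) * ((n+1).choose (i+1)) / ((i:ℝ)+1) := by
      rw [Sa, Finset.sum_range_succ'
        (fun (j:ℕ) => (-1:ℝ)^j * (((n+1).choose j : ℕ):ℝ) / ((j:ℝ) - (0:ℕ)))]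
      simp
    have split : ∀ i ∈ range (n+1), (-1:ℝ)^(i+1) * (((n+1).choose (i+1) : ℕ):ℝ) / ((i:ℝ)+1)
        = -((-1:ℝ)^i * (n.choose i) / ((i:ℝ)+1)) + (-((-1:ℝ)^i * (n.choose (i+1)) / ((i:ℝ)+1))) := by
      intro i _
      rw [Nat.choose_succ_succ n i]
      push_cast
      ring
    rw [expand, Finset.sum_congr rfl split, Finset.sum_add_distrib]
    have A : ∑ i ∈ range (n+1), -((-1:ℝ)^i * (n.choose i) / ((i:ℝ)+1)) = -(1/((n:ℝ)+1)) := by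
      rw [Finset.sum_neg_distrib, altinv]
    have B : ∑ i ∈ range (n+1), -((-1:ℝ)^i * ((n.choose (i+1) : ℕ):ℝ) / ((i:ℝ)+1)) = Sa n 0 := by
      rw [Finset.sum_neg_distrib]
      have : Sa n 0 = ∑ i ∈ range n, (-1:ℝ)^(i+1) * (n.choose (i+1)) / ((i:ℝ)+1) := by
        rw [Sa, Finset.sum_range_succ'
          (fun (j:ℕ) => (-1:ℝ)^j * ((n.choose j : ℕ):ℝ) / ((j:ℝ) - (0:ℕ)))]
        simp
      rw [this, Finset.sum_range_succ, Nat.choose_succ_self]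
      push_cast
      simp only [mul_zero, zero_div, add_zero]
      rw [← Finset.sum_neg_distrib]
      exact Finset.sum_congr rfl (fun i _ => by ring)
    rw [A, B, ih, Hr_succ]
    ring
lemma neg_one_pow_sub_nat (a b : ℕ) (h : b ≤ a) :
    (-1:ℝ)^(a-b) = (-1:ℝ)^a * (-1:ℝ)^b := by
  have h1 : (-1:ℝ)^(a-b) * (-1:ℝ)^b = (-1:ℝ)^a := by
    rw [← pow_add]; congr 1; omega
  calc (-1:ℝ)^(a-b) = (-1:ℝ)^(a-b) * ((-1:ℝ)^b * (-1:ℝ)^b) := by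
        rw [neg_one_sq_pow]; ring
    _ = ((-1:ℝ)^(a-b) * (-1:ℝ)^b) * (-1:ℝ)^b := by ring
    _ = (-1:ℝ)^a * (-1:ℝ)^b := by rw [h1]

lemma Sa_top (n : ℕ) : Sa (n+1) (n+1) = (-1:ℝ)^n * Sa (n+1) 0 := by
  rw [Sa, Sa, ← Finset.sum_range_reflect
    (fun (j:ℕ) => (-1:ℝ)^j * (((n+1).choose j:ℕ):ℝ) / ((j:ℝ) - ((n+1:ℕ):ℝ))) (n+2),
    Finset.mul_sum]
  apply Finset.sum_congr rfl
  intro j hj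
  have hj' : j ≤ n + 1 := by
    have := Finset.mem_range.mp hj; omega
  have e1 : n + 2 - 1 - j = n + 1 - j := by omega
  simp only [e1]
  rw [Nat.choose_symm hj', neg_one_pow_sub_nat (n+1) j hj', Nat.cast_sub hj']
  rcases eq_or_ne j 0 with rfl | hj0
  · norm_num
  · have hjR : (j:ℝ) ≠ 0 := Nat.cast_ne_zero.mpr hj0
    push_cast
    have hd : ((n:ℝ) + 1 - (j:ℝ)) - ((n:ℝ)+1) = -(j:ℝ) := by ring
    rw [hd, div_neg]
    field_simp
    ring

lemma Sa_formula : ∀ n l : ℕ, l ≤ n →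
    Sa n l = (-1:ℝ)^l * (n.choose l) * (Hr l - Hr (n-l)) := by
  intro n
  induction n with
  | zero =>
    intro l hl
    interval_cases l
    simp [Sa, Hr]
  | succ n ih =>
    intro l hl
    match l with
    | 0 =>
      rw [Sa_zero]
      simp [Hr]
    | (m+1) =>
      by_cases hm : m = n
      · subst hm
        have h0 : Hr 0 = 0 := by simp [Hr]
        rw [Sa_top, Sa_zero, Nat.choose_self, Nat.sub_self, h0]
        push_cast
        ring
      · have hmn : m + 1 ≤ n := by omega
        have hm1 : ((m:ℝ)+1) ≠ 0 := by positivity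
        -- Pascal-type recursion
        have hrec : Sa (n+1) (m+1) = Sa n (m+1) - Sa n m := by
          have expand := Finset.sum_range_succ'
            (fun (j:ℕ) => (-1:ℝ)^j * (((n+1).choose j:ℕ):ℝ) / ((j:ℝ) - ((m+1:ℕ):ℝ))) (n+1)
          have split : ∀ i ∈ range (n+1),
              (fun (j:ℕ) => (-1:ℝ)^j * (((n+1).choose j:ℕ):ℝ) / ((j:ℝ) - ((m+1:ℕ):ℝ))) (i+1)
              = (-((-1:ℝ)^i * ((n.choose i:ℕ):ℝ) / ((i:ℝ) - (m:ℕ))))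
                + (-((-1:ℝ)^i * ((n.choose (i+1):ℕ):ℝ) / ((i:ℝ) + 1 - ((m:ℝ)+1)))) := by
            intro i _
            simp only [Nat.choose_succ_succ n i]
            push_cast
            have hd : ((i:ℝ)+1) - ((m:ℝ)+1) = (i:ℝ) - m := by ring
            rw [hd]
            ring
          have expand2 := Finset.sum_range_succ'
            (fun (j:ℕ) => (-1:ℝ)^j * ((n.choose j:ℕ):ℝ) / ((j:ℝ) - ((m+1:ℕ):ℝ))) n
          have hSa : Sa n (m+1) = (∑ i ∈ range n,
              -((-1:ℝ)^i * ((n.choose (i+1):ℕ):ℝ) / ((i:ℝ) + 1 - ((m:ℝ)+1)))) - 1/((m:ℝ)+1) := by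
            rw [Sa, expand2, sub_eq_add_neg]
            congr 1
            · apply Finset.sum_congr rfl
              intro i _
              push_cast
              ring
            · push_cast
              have hne : (-1:ℝ) + -(m:ℝ) ≠ 0 := by
                intro h; apply hm1; linarith
              field_simp
              simp only [Nat.choose_zero_right, Nat.cast_one, zero_add, one_mul, div_neg, div_self hm1]
          have tail : (∑ i ∈ range (n+1),
              -((-1:ℝ)^i * ((n.choose (i+1):ℕ):ℝ) / ((i:ℝ) + 1 - ((m:ℝ)+1))))
              = Sa n (m+1) + 1/((m:ℝ)+1) := by
            rw [Finset.sum_range_succ, Nat.choose_succ_self, hSa]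
            push_cast
            simp only [mul_zero, zero_mul, zero_div, neg_zero, add_zero]
            ring
          have head : ∑ i ∈ range (n+1),
              (-((-1:ℝ)^i * ((n.choose i:ℕ):ℝ) / ((i:ℝ) - (m:ℕ)))) = -(Sa n m) := by
            rw [Finset.sum_neg_distrib, Sa]
          rw [Sa, expand, Finset.sum_congr rfl split, Finset.sum_add_distrib, tail, head]
          simp only [Nat.choose_zero_right]
          push_cast
          rw [zero_sub, pow_zero, one_mul, div_neg]
          field_simp
          ring
        obtain ⟨a, rfl⟩ : ∃ a, n = m + 1 + a := ⟨n-(m+1), by omega⟩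
        have ha1 : ((a:ℝ)+1) ≠ 0 := by positivity
        have e1 : m + 1 + a + 1 - (m+1) = a + 1 := by omega
        have e2 : m + 1 + a - (m+1) = a := by omega
        have e3 : m + 1 + a - m = a + 1 := by omega
        rw [hrec, ih (m+1) hmn, ih m (by omega), e1, e2, e3, Hr_succ m, Hr_succ a]
        have hp : ((m+1+a).choose (m+1) : ℝ) * ((m:ℝ)+1)
            = ((m+1+a).choose m : ℝ) * ((a:ℝ)+1) := by
          have h := Nat.choose_succ_right_eq (m+1+a) m
          have h2 : (((m+1+a).choose (m+1) * (m+1) : ℕ) : ℝ)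
              = (((m+1+a).choose m * (m+1+a-m) : ℕ) : ℝ) := by rw [h]
          rw [e3] at h2
          push_cast at h2
          push_cast
          linarith [h2]
        have key : ((m+1+a).choose m : ℝ) * (1/((m:ℝ)+1))
            = ((m+1+a).choose (m+1) : ℝ) * (1/((a:ℝ)+1)) := by
          rw [mul_one_div, mul_one_div, div_eq_div_iff hm1 ha1]
          linarith [hp]
        have hpa : (((m+1+a+1).choose (m+1) : ℕ) : ℝ)
            = ((m+1+a).choose m : ℝ) + ((m+1+a).choose (m+1) : ℝ) := by
          have h := Nat.choose_succ_succ (m+1+a) m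
          have h2 : (((m+1+a+1).choose (m+1) : ℕ) : ℝ)
              = (((m+1+a).choose m + (m+1+a).choose (m+1) : ℕ) : ℝ) := by rw [h]
          push_cast at h2
          push_cast
          linarith [h2]
        rw [hpa]
        linear_combination ((-1:ℝ)^m) * key
lemma sum_Icc_eq_range (l r : ℕ) (f : ℤ → ℝ) :
    ∑ k ∈ Finset.Icc (-(l:ℤ)) (r:ℤ), f k = ∑ j ∈ range (l+r+1), f ((j:ℤ) - l) := by
  apply Finset.sum_nbij' (i := fun (k:ℤ) => (k + l).toNat) (j := fun (j:ℕ) => (j:ℤ) - l)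
  · intro k hk
    simp only [Finset.mem_Icc] at hk
    simp only [Finset.mem_range]
    omega
  · intro j hj
    simp only [Finset.mem_range] at hj
    simp only [Finset.mem_Icc]
    omega
  · intro k hk
    simp only [Finset.mem_Icc] at hk
    omega
  · intro j hj
    simp only [Finset.mem_range] at hj
    omega
  · intro k hk
    simp only [Finset.mem_Icc] at hk
    congr 1
    omega

lemma sum_inv_aux : ∀ r l : ℕ, ∑ j ∈ range (l+r+1), 1/((j:ℝ) - l) = Hr r - Hr l := by
  intro r
  induction r with
  | zero =>
    intro l
    induction l with
    | zero => simp [Hr]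
    | succ l ihl =>
      have e : l + 1 + 0 + 1 = (l + 0 + 1) + 1 := by omega
      rw [e, Finset.sum_range_succ' (fun (j:ℕ) => 1/((j:ℝ) - (((l+1):ℕ):ℝ))) (l+0+1)]
      have step : ∀ i ∈ range (l+0+1),
          (fun (j:ℕ) => 1/((j:ℝ) - (((l+1):ℕ):ℝ))) (i+1) = 1/((i:ℝ) - l) := by
        intro i _
        simp only []
        push_cast
        ring_nf
      rw [Finset.sum_congr rfl step, ihl, Hr_succ]
      have h0 : Hr 0 = 0 := by simp [Hr]
      rw [h0]
      have hl1 : ((l:ℝ)+1) ≠ 0 := by positivity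
      have hinv : ((-1:ℝ) - (l:ℝ)) * ((-1:ℝ) - (l:ℝ))⁻¹ = 1 :=
        mul_inv_cancel₀ (by intro h; apply hl1; linarith)
      push_cast
      field_simp
      ring
  | succ r ihr =>
    intro l
    have e : l + (r + 1) + 1 = (l + r + 1) + 1 := by omega
    rw [e, Finset.sum_range_succ, ihr l, Hr_succ]
    have : ((l + r + 1 : ℕ):ℝ) - l = (r:ℝ) + 1 := by push_cast; ring
    rw [this]
    ring

lemma a0_eq (l r : ℕ) : aCoef l r 0 = Hr l - Hr r := by
  rw [aCoef, if_pos rfl]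
  have h0 : ∑ ν ∈ (Finset.Icc (-(l:ℤ)) (r:ℤ)).erase 0, (1:ℝ)/(ν:ℝ)
      = ∑ ν ∈ Finset.Icc (-(l:ℤ)) (r:ℤ), (1:ℝ)/(ν:ℝ) :=
    Finset.sum_erase _ (by norm_num)
  rw [h0, sum_Icc_eq_range l r (fun ν => 1/(ν:ℝ))]
  have hc : ∀ j ∈ range (l+r+1), (1:ℝ)/((((j:ℤ) - l):ℤ):ℝ) = 1/((j:ℝ) - l) := by
    intro j _
    push_cast
    ring_nf
  rw [Finset.sum_congr rfl hc, sum_inv_aux r l]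
  ring

lemma cast_choose_fact (l r j : ℕ) (hj : j ≤ l + r) :
    ((l.factorial * r.factorial : ℕ):ℝ) / ((j.factorial * (l+r-j).factorial : ℕ):ℝ)
    = (((l+r).choose j : ℕ) : ℝ) * ((l.factorial * r.factorial : ℕ):ℝ)
        / (((l+r).factorial : ℕ):ℝ) := by
  rw [Nat.cast_choose ℝ hj]
  have h1 : ((j.factorial : ℕ):ℝ) ≠ 0 := by positivity
  have h2 : (((l+r-j).factorial : ℕ):ℝ) ≠ 0 := by positivity
  have h3 : (((l+r).factorial : ℕ):ℝ) ≠ 0 := by positivity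
  push_cast
  field_simp
lemma zero_mem_Icc (l r : ℕ) : (0:ℤ) ∈ Finset.Icc (-(l:ℤ)) (r:ℤ) := by
  simp only [Finset.mem_Icc]
  omega

lemma sum_aCoef_mul_k (l r : ℕ) (h : 1 ≤ l + r) :
    ∑ k ∈ Finset.Icc (-(l:ℤ)) (r:ℤ), aCoef l r k * (k:ℝ) = 1 := by
  have hstep : ∀ k ∈ Finset.Icc (-(l:ℤ)) (r:ℤ), aCoef l r k * (k:ℝ)
      = -((-1:ℝ)^k * ((Nat.factorial l * Nat.factorial r : ℕ):ℝ)
          / ((Nat.factorial ((l:ℤ)+k).toNat * Nat.factorial ((r:ℤ)-k).toNat : ℕ):ℝ))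
        + (if k = 0 then 1 else 0) := by
    intro k _
    rcases eq_or_ne k 0 with rfl | hk0
    · have e1 : ((l:ℤ) + 0).toNat = l := by omega
      have e2 : ((r:ℤ) - 0).toNat = r := by omega
      rw [e1, e2, if_pos rfl, Int.cast_zero, mul_zero, zpow_zero, one_mul,
        div_self (by positivity : ((Nat.factorial l * Nat.factorial r : ℕ):ℝ) ≠ 0)]
      norm_num
    · rw [aCoef]
      simp only [if_neg hk0]
      have hkR : (k:ℝ) ≠ 0 := Int.cast_ne_zero.mpr hk0
      have hB : ((Nat.factorial ((l:ℤ)+k).toNat * Nat.factorial ((r:ℤ)-k).toNat : ℕ):ℝ) ≠ 0 := by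
        positivity
      rw [add_zero]
      field_simp
  rw [Finset.sum_congr rfl hstep, Finset.sum_add_distrib]
  have hif : ∑ k ∈ Finset.Icc (-(l:ℤ)) (r:ℤ), (if k = 0 then (1:ℝ) else 0) = 1 := by
    rw [Finset.sum_ite_eq' (Finset.Icc (-(l:ℤ)) (r:ℤ)) (0:ℤ) (fun _ => (1:ℝ)),
      if_pos (zero_mem_Icc l r)]
  have hmain : ∑ k ∈ Finset.Icc (-(l:ℤ)) (r:ℤ),
      -((-1:ℝ)^k * ((Nat.factorial l * Nat.factorial r : ℕ):ℝ)
          / ((Nat.factorial ((l:ℤ)+k).toNat * Nat.factorial ((r:ℤ)-k).toNat : ℕ):ℝ)) = 0 := by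
    rw [sum_Icc_eq_range l r (fun (k:ℤ) =>
      -((-1:ℝ)^k * ((Nat.factorial l * Nat.factorial r : ℕ):ℝ)
          / ((Nat.factorial ((l:ℤ)+k).toNat * Nat.factorial ((r:ℤ)-k).toNat : ℕ):ℝ)))]
    have hterm : ∀ j ∈ range (l+r+1), (fun (k:ℤ) =>
        -((-1:ℝ)^k * ((Nat.factorial l * Nat.factorial r : ℕ):ℝ)
          / ((Nat.factorial ((l:ℤ)+k).toNat * Nat.factorial ((r:ℤ)-k).toNat : ℕ):ℝ))) ((j:ℤ) - l)
        = (-((-1:ℝ)^l * ((Nat.factorial l * Nat.factorial r : ℕ):ℝ)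
            / (((l+r).factorial : ℕ):ℝ)))
          * ((-1:ℝ)^j * (((l+r).choose j : ℕ):ℝ)) := by
      intro j hj
      have hj' : j ≤ l + r := by
        simp only [Finset.mem_range] at hj; omega
      simp only []
      have e1 : ((l:ℤ) + ((j:ℤ) - l)).toNat = j := by omega
      have e2 : ((r:ℤ) - ((j:ℤ) - l)).toNat = l + r - j := by omega
      rw [e1, e2, neg_one_zpow_sub j l]
      have hc := cast_choose_fact l r j hj'
      linear_combination (-(-1:ℝ)^j * (-1:ℝ)^l) * hc
    rw [Finset.sum_congr rfl hterm, ← Finset.mul_sum, alt0 (l+r) h, mul_zero]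
  rw [hmain, hif, zero_add]

lemma sum_aCoef_mul_k2 (l r : ℕ) (h : 2 ≤ l + r) :
    ∑ k ∈ Finset.Icc (-(l:ℤ)) (r:ℤ), aCoef l r k * (k:ℝ)^2 = 0 := by
  have hstep : ∀ k ∈ Finset.Icc (-(l:ℤ)) (r:ℤ), aCoef l r k * (k:ℝ)^2
      = -((-1:ℝ)^k * ((Nat.factorial l * Nat.factorial r : ℕ):ℝ)
          / ((Nat.factorial ((l:ℤ)+k).toNat * Nat.factorial ((r:ℤ)-k).toNat : ℕ):ℝ) * (k:ℝ)) := by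
    intro k _
    rcases eq_or_ne k 0 with rfl | hk0
    · simp
    · rw [aCoef]
      simp only [if_neg hk0]
      have hkR : (k:ℝ) ≠ 0 := Int.cast_ne_zero.mpr hk0
      have hB : ((Nat.factorial ((l:ℤ)+k).toNat * Nat.factorial ((r:ℤ)-k).toNat : ℕ):ℝ) ≠ 0 := by
        positivity
      field_simp
  rw [Finset.sum_congr rfl hstep]
  rw [sum_Icc_eq_range l r (fun (k:ℤ) =>
    -((-1:ℝ)^k * ((Nat.factorial l * Nat.factorial r : ℕ):ℝ)
        / ((Nat.factorial ((l:ℤ)+k).toNat * Nat.factorial ((r:ℤ)-k).toNat : ℕ):ℝ) * (k:ℝ)))]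
  have hterm : ∀ j ∈ range (l+r+1), (fun (k:ℤ) =>
      -((-1:ℝ)^k * ((Nat.factorial l * Nat.factorial r : ℕ):ℝ)
        / ((Nat.factorial ((l:ℤ)+k).toNat * Nat.factorial ((r:ℤ)-k).toNat : ℕ):ℝ) * (k:ℝ))) ((j:ℤ) - l)
      = (-((-1:ℝ)^l * ((Nat.factorial l * Nat.factorial r : ℕ):ℝ) / (((l+r).factorial : ℕ):ℝ)))
          * ((-1:ℝ)^j * (j:ℝ) * (((l+r).choose j : ℕ):ℝ))
        + (((l:ℝ)) * ((-1:ℝ)^l * ((Nat.factorial l * Nat.factorial r : ℕ):ℝ) / (((l+r).factorial : ℕ):ℝ)))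
          * ((-1:ℝ)^j * (((l+r).choose j : ℕ):ℝ)) := by
    intro j hj
    have hj' : j ≤ l + r := by
      simp only [Finset.mem_range] at hj; omega
    simp only []
    have e1 : ((l:ℤ) + ((j:ℤ) - l)).toNat = j := by omega
    have e2 : ((r:ℤ) - ((j:ℤ) - l)).toNat = l + r - j := by omega
    rw [e1, e2, neg_one_zpow_sub j l]
    have hc := cast_choose_fact l r j hj'
    push_cast at hc ⊢
    linear_combination (-(-1:ℝ)^j * (-1:ℝ)^l * ((j:ℝ) - (l:ℝ))) * hc
  rw [Finset.sum_congr rfl hterm, Finset.sum_add_distrib, ← Finset.mul_sum, ← Finset.mul_sum,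
    alt0 (l+r) (by omega), alt1 (l+r) h, mul_zero, mul_zero, add_zero]

lemma sum_aCoef (l r : ℕ) : ∑ k ∈ Finset.Icc (-(l:ℤ)) (r:ℤ), aCoef l r k = 0 := by
  rw [← Finset.add_sum_erase _ _ (zero_mem_Icc l r)]
  have herase : ∑ k ∈ (Finset.Icc (-(l:ℤ)) (r:ℤ)).erase 0, aCoef l r k
      = ∑ k ∈ (Finset.Icc (-(l:ℤ)) (r:ℤ)).erase 0, (fun (k:ℤ) =>
          -((-1:ℝ)^k / (k:ℝ)) * ((Nat.factorial l * Nat.factorial r : ℕ):ℝ)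
            / ((Nat.factorial ((l:ℤ)+k).toNat * Nat.factorial ((r:ℤ)-k).toNat : ℕ):ℝ)) k := by
    apply Finset.sum_congr rfl
    intro k hk
    have hk0 : k ≠ 0 := (Finset.mem_erase.mp hk).1
    rw [aCoef, if_neg hk0]
  have hzero : (fun (k:ℤ) =>
      -((-1:ℝ)^k / (k:ℝ)) * ((Nat.factorial l * Nat.factorial r : ℕ):ℝ)
        / ((Nat.factorial ((l:ℤ)+k).toNat * Nat.factorial ((r:ℤ)-k).toNat : ℕ):ℝ)) 0 = 0 := by
    show -((-1:ℝ)^(0:ℤ) / ((0:ℤ):ℝ)) * ((Nat.factorial l * Nat.factorial r : ℕ):ℝ)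
        / ((Nat.factorial ((l:ℤ)+(0:ℤ)).toNat * Nat.factorial ((r:ℤ)-(0:ℤ)).toNat : ℕ):ℝ) = 0
    norm_num
  rw [herase, Finset.sum_erase (Finset.Icc (-(l:ℤ)) (r:ℤ))
    (f := fun (k:ℤ) =>
      -((-1:ℝ)^k / (k:ℝ)) * ((Nat.factorial l * Nat.factorial r : ℕ):ℝ)
        / ((Nat.factorial ((l:ℤ)+k).toNat * Nat.factorial ((r:ℤ)-k).toNat : ℕ):ℝ)) hzero]
  rw [sum_Icc_eq_range l r (fun (k:ℤ) =>
      -((-1:ℝ)^k / (k:ℝ)) * ((Nat.factorial l * Nat.factorial r : ℕ):ℝ)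
        / ((Nat.factorial ((l:ℤ)+k).toNat * Nat.factorial ((r:ℤ)-k).toNat : ℕ):ℝ))]
  have hterm : ∀ j ∈ range (l+r+1), (fun (k:ℤ) =>
      -((-1:ℝ)^k / (k:ℝ)) * ((Nat.factorial l * Nat.factorial r : ℕ):ℝ)
        / ((Nat.factorial ((l:ℤ)+k).toNat * Nat.factorial ((r:ℤ)-k).toNat : ℕ):ℝ)) ((j:ℤ) - l)
      = (-((-1:ℝ)^l * ((Nat.factorial l * Nat.factorial r : ℕ):ℝ) / (((l+r).factorial : ℕ):ℝ)))
        * ((-1:ℝ)^j * (((l+r).choose j : ℕ):ℝ) / ((j:ℝ) - l)) := by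
    intro j hj
    have hj' : j ≤ l + r := by
      simp only [Finset.mem_range] at hj; omega
    simp only []
    have e1 : ((l:ℤ) + ((j:ℤ) - l)).toNat = j := by omega
    have e2 : ((r:ℤ) - ((j:ℤ) - l)).toNat = l + r - j := by omega
    rw [e1, e2, neg_one_zpow_sub j l]
    have hc := cast_choose_fact l r j hj'
    rcases eq_or_ne j l with rfl | hjl
    · push_cast
      rw [sub_self, div_zero, div_zero]
      simp
    · have hjlR : (j:ℝ) - l ≠ 0 := by
        have : (j:ℝ) ≠ (l:ℝ) := by exact_mod_cast hjl
        exact sub_ne_zero_of_ne this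
      push_cast at hc ⊢
      linear_combination (-(-1:ℝ)^j * (-1:ℝ)^l / ((j:ℝ) - (l:ℝ))) * hc
  rw [Finset.sum_congr rfl hterm, ← Finset.mul_sum]
  have hSa : ∑ j ∈ range (l+r+1), ((-1:ℝ)^j * (((l+r).choose j : ℕ):ℝ) / ((j:ℝ) - l))
      = Sa (l+r) l := rfl
  rw [hSa, Sa_formula (l+r) l (by omega)]
  have e3 : l + r - l = r := by omega
  rw [e3, a0_eq]
  have hu2 : (-1:ℝ)^(l*2) = 1 := by
    rw [pow_mul, pow_two]; exact neg_one_sq_pow l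
  have hAC : (((l+r).choose l : ℕ):ℝ) * ((Nat.factorial l * Nat.factorial r : ℕ):ℝ)
      / (((l+r).factorial : ℕ):ℝ) = 1 := by
    rw [Nat.cast_choose ℝ (by omega : l ≤ l + r), e3]
    have h1 : ((l.factorial : ℕ):ℝ) ≠ 0 := by positivity
    have h2 : ((r.factorial : ℕ):ℝ) ≠ 0 := by positivity
    have h3 : (((l+r).factorial : ℕ):ℝ) ≠ 0 := by positivity
    push_cast
    field_simp
  linear_combination (-(Hr l - Hr r) * ((((l+r).choose l : ℕ):ℝ)
      * ((Nat.factorial l * Nat.factorial r : ℕ):ℝ) / (((l+r).factorial : ℕ):ℝ))) * hu2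
    + (-(Hr l - Hr r)) * hAC
lemma lam0_re (l r : ℕ) (θ : ℝ) :
    (lam0 l r (Complex.exp ((θ:ℂ) * Complex.I))).re
      = -∑ k ∈ Finset.Icc (-(l:ℤ)) (r:ℤ), aCoef l r k * Real.cos ((k:ℝ) * θ) := by
  rw [lam0, Complex.neg_re, Complex.re_sum]
  congr 1
  apply Finset.sum_congr rfl
  intro k _
  have he : (Complex.exp ((θ:ℂ) * Complex.I))^k
      = Complex.exp ((((k:ℝ) * θ : ℝ):ℂ) * Complex.I) := by
    rw [← Complex.exp_int_mul]
    congr 1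
    push_cast
    ring
  rw [he, Complex.mul_re, Complex.ofReal_re, Complex.ofReal_im,
    Complex.exp_ofReal_mul_I_re, Complex.exp_ofReal_mul_I_im]
  ring

lemma lam0_im (l r : ℕ) (θ : ℝ) :
    (lam0 l r (Complex.exp ((θ:ℂ) * Complex.I))).im
      = -∑ k ∈ Finset.Icc (-(l:ℤ)) (r:ℤ), aCoef l r k * Real.sin ((k:ℝ) * θ) := by
  rw [lam0, Complex.neg_im, Complex.im_sum]
  congr 1
  apply Finset.sum_congr rfl
  intro k _
  have he : (Complex.exp ((θ:ℂ) * Complex.I))^k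
      = Complex.exp ((((k:ℝ) * θ : ℝ):ℂ) * Complex.I) := by
    rw [← Complex.exp_int_mul]
    congr 1
    push_cast
    ring
  rw [he, Complex.mul_im, Complex.ofReal_re, Complex.ofReal_im,
    Complex.exp_ofReal_mul_I_re, Complex.exp_ofReal_mul_I_im]
  ring

set_option maxHeartbeats 2000000 in
/-- Instability of forward Euler with a high-order upwind spatial
discretization (`l ≥ 2`) of the advection equation at fixed Courant number:
for every `μ_c > 0` there is `θ₀ > 0` such that `|1 + μ_c·λ₀(e^{iθ})| > 1`
for all `0 < |θ| < θ₀`. -/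
theorem forward_euler_high_order_unstable (l r : ℕ)
    (h1 : r + 1 ≤ l) (h2 : l ≤ r + 2) (hl : 2 ≤ l) :
    ∀ μc : ℝ, 0 < μc → ∃ θ₀ > (0 : ℝ), ∀ θ : ℝ, 0 < |θ| → |θ| < θ₀ →
      1 < ‖(1 + (μc : ℂ) * lam0 l r (Complex.exp (θ * Complex.I)))‖ := by
  intro μc hμ
  have hn2 : 2 ≤ l + r := by omega
  set n : ℕ := l + r with hn
  set S : Finset ℤ := Finset.Icc (-(l:ℤ)) (r:ℤ) with hS
  set C4 : ℝ := ∑ k ∈ S, |aCoef l r k| * (k:ℝ)^4 with hC4def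
  set C3 : ℝ := ∑ k ∈ S, |aCoef l r k| * |(k:ℝ)|^3 with hC3def
  have hC4 : 0 ≤ C4 := Finset.sum_nonneg fun k _ => by positivity
  have hC3 : 0 ≤ C3 := Finset.sum_nonneg fun k _ => by positivity
  clear_value n S C4 C3
  refine ⟨min (1/((n:ℝ)+1)) (min (1/(2*(C3+1))) (μc/(8*(C4+1)))), by positivity, ?_⟩
  intro θ hθpos hθlt
  have ht1 : |θ| < 1/((n:ℝ)+1) := lt_of_lt_of_le hθlt (min_le_left _ _)
  have ht2 : |θ| < 1/(2*(C3+1)) :=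
    lt_of_lt_of_le hθlt ((min_le_right _ _).trans (min_le_left _ _))
  have ht3 : |θ| < μc/(8*(C4+1)) :=
    lt_of_lt_of_le hθlt ((min_le_right _ _).trans (min_le_right _ _))
  have htle1 : |θ| ≤ 1 := by
    have : 1/((n:ℝ)+1) ≤ 1 := by
      rw [div_le_one (by positivity)]
      have : (0:ℝ) ≤ n := Nat.cast_nonneg n
      linarith
    linarith
  have hksmall : ∀ k ∈ S, |(k:ℝ) * θ| ≤ 1 := by
    intro k hk
    simp only [hS, Finset.mem_Icc] at hk
    have hkn : |(k:ℝ)| ≤ (n:ℝ) := by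
      have h1 : (-(n:ℤ)) ≤ k := by omega
      have h2 : k ≤ (n:ℤ) := by omega
      rw [abs_le]
      constructor
      · exact_mod_cast Int.cast_le.mpr h1
      · exact_mod_cast Int.cast_le.mpr h2
    rw [abs_mul]
    have hnn : (0:ℝ) ≤ n := Nat.cast_nonneg n
    have hs1 : |(k:ℝ)| * |θ| ≤ (n:ℝ) * |θ| :=
      mul_le_mul_of_nonneg_right hkn (abs_nonneg θ)
    have hs2 : ((n:ℝ)+1) * |θ| < 1 := by
      rw [lt_div_iff₀ (by positivity : (0:ℝ) < (n:ℝ)+1)] at ht1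
      linarith [ht1]
    nlinarith [abs_nonneg θ]
  set R : ℝ := -∑ k ∈ S, aCoef l r k * Real.cos ((k:ℝ) * θ) with hRdef
  set I : ℝ := -∑ k ∈ S, aCoef l r k * Real.sin ((k:ℝ) * θ) with hIdef
  clear_value R I
  -- bound on R
  have hzero1 : ∑ k ∈ S, aCoef l r k = 0 := by rw [hS]; exact sum_aCoef l r
  have hzero2 : ∑ k ∈ S, aCoef l r k * (k:ℝ)^2 = 0 := by
    rw [hS]; exact sum_aCoef_mul_k2 l r (by omega)
  have hone : ∑ k ∈ S, aCoef l r k * (k:ℝ) = 1 := by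
    rw [hS]; exact sum_aCoef_mul_k l r (by omega)
  have hRrw : R = -∑ k ∈ S, aCoef l r k * (Real.cos ((k:ℝ)*θ) - (1 - ((k:ℝ)*θ)^2/2)) := by
    rw [hRdef]
    congr 1
    have expand : ∀ k ∈ S, aCoef l r k * (Real.cos ((k:ℝ)*θ) - (1 - ((k:ℝ)*θ)^2/2))
        = aCoef l r k * Real.cos ((k:ℝ)*θ) - aCoef l r k
          + (θ^2/2) * (aCoef l r k * (k:ℝ)^2) := by
      intro k _
      ring
    rw [Finset.sum_congr rfl expand, Finset.sum_add_distrib, Finset.sum_sub_distrib,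
      ← Finset.mul_sum, hzero1, hzero2, mul_zero, sub_zero, add_zero]
  have hRbound : |R| ≤ C4 * θ^4 := by
    rw [hRrw, abs_neg]
    calc |∑ k ∈ S, aCoef l r k * (Real.cos ((k:ℝ)*θ) - (1 - ((k:ℝ)*θ)^2/2))|
        ≤ ∑ k ∈ S, |aCoef l r k * (Real.cos ((k:ℝ)*θ) - (1 - ((k:ℝ)*θ)^2/2))| :=
          Finset.abs_sum_le_sum_abs _ _
      _ ≤ ∑ k ∈ S, |aCoef l r k| * ((k:ℝ)^4 * θ^4) := by
          apply Finset.sum_le_sum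
          intro k hk
          rw [abs_mul]
          apply mul_le_mul_of_nonneg_left _ (abs_nonneg _)
          have hb := Real.cos_bound (hksmall k hk)
          have he : |(k:ℝ)*θ|^4 = (k:ℝ)^4 * θ^4 := by
            rw [← abs_pow, abs_of_nonneg (by positivity : (0:ℝ) ≤ ((k:ℝ)*θ)^4)]
            ring
          rw [← he]
          nlinarith [hb, pow_nonneg (abs_nonneg ((k:ℝ)*θ)) 4]
      _ = C4 * θ^4 := by
          rw [hC4def, Finset.sum_mul]
          apply Finset.sum_congr rfl
          intro k _
          ring
  -- bound on I
  have hIrw : I + θ = -∑ k ∈ S, aCoef l r k * (Real.sin ((k:ℝ)*θ) - (k:ℝ)*θ) := by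
    rw [hIdef]
    have expand : ∀ k ∈ S, aCoef l r k * (Real.sin ((k:ℝ)*θ) - (k:ℝ)*θ)
        = aCoef l r k * Real.sin ((k:ℝ)*θ) - θ * (aCoef l r k * (k:ℝ)) := by
      intro k _
      ring
    rw [Finset.sum_congr rfl expand, Finset.sum_sub_distrib, ← Finset.mul_sum, hone, mul_one]
    ring
  have hIbound : |I + θ| ≤ C3 * |θ|^3 := by
    rw [hIrw, abs_neg]
    calc |∑ k ∈ S, aCoef l r k * (Real.sin ((k:ℝ)*θ) - (k:ℝ)*θ)|
        ≤ ∑ k ∈ S, |aCoef l r k * (Real.sin ((k:ℝ)*θ) - (k:ℝ)*θ)| :=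
          Finset.abs_sum_le_sum_abs _ _
      _ ≤ ∑ k ∈ S, |aCoef l r k| * (|(k:ℝ)|^3 * |θ|^3) := by
          apply Finset.sum_le_sum
          intro k hk
          rw [abs_mul]
          apply mul_le_mul_of_nonneg_left _ (abs_nonneg _)
          have hb := Real.sin_bound (hksmall k hk)
          have he : |(k:ℝ)*θ|^3 = |(k:ℝ)|^3 * |θ|^3 := by
            rw [abs_mul, mul_pow]
          have habs3 : |Real.sin ((k:ℝ)*θ) - (k:ℝ)*θ| ≤ |(k:ℝ)*θ|^3 := by
            have hx := hksmall k hk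
            have h4 : |(k:ℝ)*θ|^4 ≤ |(k:ℝ)*θ|^3 := by
              have h0 : (0:ℝ) ≤ |(k:ℝ)*θ| := abs_nonneg _
              calc |(k:ℝ)*θ|^4 = |(k:ℝ)*θ|^3 * |(k:ℝ)*θ| := by ring
                _ ≤ |(k:ℝ)*θ|^3 * 1 := by
                    apply mul_le_mul_of_nonneg_left hx (by positivity)
                _ = |(k:ℝ)*θ|^3 := by ring
            have hcube : |((k:ℝ)*θ)^3| = |(k:ℝ)*θ|^3 := by
              rw [abs_pow]
            calc |Real.sin ((k:ℝ)*θ) - (k:ℝ)*θ|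
                ≤ |Real.sin ((k:ℝ)*θ) - ((k:ℝ)*θ - ((k:ℝ)*θ)^3/6)| + |((k:ℝ)*θ)^3/6| := by
                  have : Real.sin ((k:ℝ)*θ) - (k:ℝ)*θ
                      = (Real.sin ((k:ℝ)*θ) - ((k:ℝ)*θ - ((k:ℝ)*θ)^3/6)) + (-(((k:ℝ)*θ)^3/6)) := by
                    ring
                  rw [this]
                  calc |(Real.sin ((k:ℝ)*θ) - ((k:ℝ)*θ - ((k:ℝ)*θ)^3/6)) + (-(((k:ℝ)*θ)^3/6))|
                      ≤ |Real.sin ((k:ℝ)*θ) - ((k:ℝ)*θ - ((k:ℝ)*θ)^3/6)| + |(-(((k:ℝ)*θ)^3/6))| :=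
                        abs_add_le _ _
                    _ = |Real.sin ((k:ℝ)*θ) - ((k:ℝ)*θ - ((k:ℝ)*θ)^3/6)| + |((k:ℝ)*θ)^3/6| := by
                        rw [abs_neg]
              _ ≤ |(k:ℝ)*θ|^4 * (5/96) + |(k:ℝ)*θ|^3/6 := by
                  have : |((k:ℝ)*θ)^3/6| = |(k:ℝ)*θ|^3/6 := by
                    rw [abs_div, hcube]
                    norm_num
                  rw [this]
                  nlinarith [hb, mul_le_mul_of_nonneg_left hx (pow_nonneg (abs_nonneg ((k:ℝ)*θ)) 4),
                    pow_nonneg (abs_nonneg ((k:ℝ)*θ)) 4]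
              _ ≤ |(k:ℝ)*θ|^3 := by
                  nlinarith [h4, pow_nonneg (abs_nonneg ((k:ℝ)*θ)) 3]
          rw [← he]
          exact habs3
      _ = C3 * |θ|^3 := by
          rw [hC3def, Finset.sum_mul]
          apply Finset.sum_congr rfl
          intro k _
          ring
  -- lower bound on |I|
  have hI2 : θ^2/4 ≤ I^2 := by
    have htri : |θ| ≤ |I + θ| + |I| := by
      calc |θ| = |(I + θ) - I| := by congr 1; ring
        _ ≤ |I + θ| + |I| := abs_sub _ _
    have hsm : C3 * |θ|^2 ≤ 1/2 := by
      calc C3 * |θ|^2 ≤ C3 * |θ| := by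
            nlinarith [mul_nonneg hC3 (mul_nonneg (abs_nonneg θ)
              (by linarith : (0:ℝ) ≤ 1 - |θ|))]
        _ ≤ (C3+1) * |θ| := by nlinarith [abs_nonneg θ]
        _ ≤ (C3+1) * (1/(2*(C3+1))) :=
            mul_le_mul_of_nonneg_left (le_of_lt ht2) (by positivity)
        _ = 1/2 := by
            field_simp
    have hIlow : |θ|/2 ≤ |I| := by
      nlinarith [mul_le_mul_of_nonneg_right hsm (abs_nonneg θ), htri, hIbound]
    have hsq : |θ|/2 * (|θ|/2) ≤ |I| * |I| :=
      mul_le_mul hIlow hIlow (by positivity) (abs_nonneg I)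
    have e1 : |I| * |I| = I^2 := by rw [← sq_abs I]; ring
    have e2 : |θ| * |θ| = θ^2 := by rw [← sq_abs θ]; ring
    nlinarith [hsq, e1, e2]
  -- the quartic term is dominated
  have hquart : 2*μc*C4*θ^4 < μc^2 * θ^2 / 4 := by
    have h8 : 8*(C4+1)*|θ| < μc := by
      rw [div_eq_mul_inv] at ht3
      have hpos : (0:ℝ) < 8*(C4+1) := by positivity
      calc 8*(C4+1)*|θ| < 8*(C4+1)*(μc*(8*(C4+1))⁻¹) := by
            apply mul_lt_mul_of_pos_left ht3 hpos
        _ = μc := by field_simp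
    have hts : θ^2 = |θ| * |θ| := by
      rw [abs_mul_abs_self]; ring
    have ht4 : θ^4 = (|θ| * |θ|)^2 := by
      rw [← hts]; ring
    have hkey : 8*C4*(|θ| * |θ|) < μc := by
      nlinarith [h8, mul_nonneg (mul_nonneg (by positivity : (0:ℝ) ≤ 8*(C4+1))
        (abs_nonneg θ)) (by linarith : (0:ℝ) ≤ 1 - |θ|), abs_nonneg θ]
    have hp2 : (0:ℝ) < μc * (|θ| * |θ|) / 4 :=
      div_pos (mul_pos hμ (mul_pos hθpos hθpos)) (by norm_num)
    rw [ht4, hts]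
    nlinarith [mul_lt_mul_of_pos_left hkey hp2]
  -- assemble
  set z : ℂ := 1 + (μc : ℂ) * lam0 l r (Complex.exp ((θ:ℂ) * Complex.I)) with hz
  have hre : z.re = 1 + μc * R := by
    rw [hz, Complex.add_re, Complex.one_re, Complex.mul_re, Complex.ofReal_re,
      Complex.ofReal_im, lam0_re l r θ]
    rw [hRdef, hS]
    ring
  have him : z.im = μc * I := by
    rw [hz, Complex.add_im, Complex.one_im, Complex.mul_im, Complex.ofReal_re,
      Complex.ofReal_im, lam0_im l r θ]
    rw [hIdef, hS]
    ring
  have habs2 : ‖z‖^2 = (1 + μc * R)^2 + (μc * I)^2 := by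
    rw [Complex.sq_norm, Complex.normSq_apply, hre, him]
    ring
  have hgt : 1 < (1 + μc * R)^2 + (μc * I)^2 := by
    have hRlow : -(C4 * θ^4) ≤ R := by
      have := neg_abs_le R
      linarith [hRbound]
    nlinarith [mul_le_mul_of_nonneg_left hI2 (sq_nonneg μc),
      mul_le_mul_of_nonneg_left hRlow (by positivity : (0:ℝ) ≤ 2*μc),
      hquart, sq_nonneg (μc * R)]
  have hnn := norm_nonneg z
  have hfin : 1 < ‖z‖^2 := by rw [habs2]; exact hgt
  nlinarith [hfin, hnn]
end

section
/- Let l⁻, r⁻ ≥ 0 be integers with r⁻ + 1 ≤ l⁻ ≤ r⁻ + 2, let a⁻_k be the optimal first-derivative coefficients on the stencil {-l⁻, …, r⁻}, and let a⁻(s) = Σ_{k=-l⁻}^{r⁻} a⁻_k s^k; write x₀⁻(θ) = Re a⁻(e^{iθ}) and y₀⁻(θ) = Im a⁻(e^{iθ}). Let q ≥ 1 and let x_∞(θ) = Σ_{k=-q}^{q} b_k e^{ikθ} (which is real), with b_k the optimal second-derivative coefficients. For R > 0 and θ ∈ [-π, π], the eigenvalues of the semi-discretized partially dissipative wave system with the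 symmetric pair of first-derivative discretizations (a⁺_k = -a⁻_{-k}) are λ = ½( R·x_∞(θ) - 2·x₀⁻(θ) + w ) for w ∈ ℂ with w² = R²·x_∞(θ)² - 4·y₀⁻(θ)². Then there exists a constant L > 0, depending only on l⁻, r⁻ and q, such that for every R > 0, every θ ∈ [-π, π], and every such eigenvalue λ = x + iy, one has x ≤ -R·L·y². -/
set_option maxHeartbeats 1000000


/-- Optimal centered finite-difference coefficients for the second derivative on
the stencil `{-q, …, q}`. -/
noncomputable def bCoef (q : ℕ) (k : ℤ) : ℝ :=
  if k = 0 then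
    -∑ j ∈ Finset.Icc 1 q, 2 / (j : ℝ) ^ 2
  else
    -(2 * (-1 : ℝ) ^ k / (k : ℝ) ^ 2) *
      ((Nat.factorial q * Nat.factorial q : ℕ) : ℝ) /
      ((Nat.factorial ((q : ℤ) + k).toNat * Nat.factorial ((q : ℤ) - k).toNat : ℕ) : ℝ)

/-- The symbol `λ_∞(s) = Σ_{k=-q}^{q} b_k s^k` of the diffusion discretization. -/
noncomputable def lamInf (q : ℕ) (s : ℂ) : ℂ :=
  ∑ k ∈ Finset.Icc (-(q : ℤ)) (q : ℤ), (bCoef q k : ℂ) * s ^ k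

/-- The symbol `a⁻(s) = Σ_{k=-l}^{r} a_k s^k` of the upwind first-derivative
discretization (without the minus sign of `λ₀`). -/
noncomputable def aSym (l r : ℕ) (s : ℂ) : ℂ :=
  ∑ k ∈ Finset.Icc (-(l : ℤ)) (r : ℤ), (aCoef l r k : ℂ) * s ^ k


section Helpers
open Finset

-- zpow helpers for (-1 : ℝ)
lemma negone_zpow_natCast (m : ℕ) : (-1 : ℝ) ^ (m : ℤ) = (-1 : ℝ) ^ m := zpow_natCast _ _

lemma negone_zpow_neg (k : ℤ) : (-1 : ℝ) ^ (-k) = (-1 : ℝ) ^ k := by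
  rw [zpow_neg]
  rcases Int.even_or_odd k with h | h
  · rw [h.neg_one_zpow]; norm_num
  · rw [Odd.neg_one_zpow h]; norm_num

lemma negone_zpow_sub (m n : ℕ) : (-1 : ℝ) ^ ((m : ℤ) - n) = (-1 : ℝ) ^ (m + n) := by
  rw [zpow_sub₀ (by norm_num : (-1:ℝ) ≠ 0), zpow_natCast, zpow_natCast, pow_add, div_eq_mul_inv]
  congr 1
  rcases Nat.even_or_odd n with h | h
  · rw [h.neg_one_pow]; norm_num
  · rw [h.neg_one_pow]; norm_num

-- |sin (n x)| ≤ n |sin x|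
lemma abs_sin_nat_mul_le (n : ℕ) (x : ℝ) : |Real.sin (n * x)| ≤ n * |Real.sin x| := by
  induction n with
  | zero => simp
  | succ n ih =>
    have : ((n:ℝ)+1) * x = n * x + x := by ring
    rw [Nat.cast_succ, this, Real.sin_add]
    calc |Real.sin (n*x) * Real.cos x + Real.cos (n*x) * Real.sin x|
        ≤ |Real.sin (n*x) * Real.cos x| + |Real.cos (n*x) * Real.sin x| := abs_add_le _ _
      _ ≤ |Real.sin (n*x)| * 1 + 1 * |Real.sin x| := by
          rw [abs_mul, abs_mul]
          gcongr <;> first | exact Real.abs_cos_le_one _ | simp [abs_nonneg]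
      _ ≤ n * |Real.sin x| + 1 * |Real.sin x| := by rw [mul_one]; gcongr
      _ = (n + 1) * |Real.sin x| := by ring

lemma abs_sin_int_mul_le (k : ℤ) (x : ℝ) : |Real.sin (k * x)| ≤ |(k:ℝ)| * |Real.sin x| := by
  rcases le_or_gt 0 k with h | h
  · lift k to ℕ using h
    simpa using abs_sin_nat_mul_le k x
  · have hk : ((-k).toNat : ℝ) = -(k:ℝ) := by
      have h2 : ((-k).toNat : ℤ) = -k := Int.toNat_of_nonneg (by omega)
      exact_mod_cast congrArg (Int.cast : ℤ → ℝ) h2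
    have h3 := abs_sin_nat_mul_le (-k).toNat x
    rw [hk] at h3
    have h4 : (k:ℝ) * x = -(-(k:ℝ) * x) := by ring
    rw [h4, Real.sin_neg, abs_neg]
    rw [abs_of_nonpos (by exact_mod_cast h.le : (k:ℝ) ≤ 0)]
    exact h3


noncomputable def cC (n : ℕ) (k : ℤ) : ℝ :=
  (-1 : ℝ) ^ k * (((2 * n).choose ((n : ℤ) + k).toNat : ℕ) : ℝ)

noncomputable def dC (n : ℕ) : ℝ := -(2 / ((n:ℝ)^2 * (((2*n).choose n : ℕ) : ℝ)))

noncomputable def CCa (l r : ℕ) : ℝ :=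
  ((l.factorial : ℕ) : ℝ) * ((r.factorial : ℕ) : ℝ) / (((l+r).factorial : ℝ) * l)

lemma expand_pow (n : ℕ) (s : ℂ) (hs : s ≠ 0) :
    (2 - s - s⁻¹) ^ n = ∑ k ∈ Icc (-(n : ℤ)) (n : ℤ), ((cC n k : ℝ) : ℂ) * s ^ k := by
  have h1 : 2 - s - s⁻¹ = -((s - 1) ^ 2 * s⁻¹) := by field_simp; ring
  have hmap : Icc (-(n : ℤ)) (n : ℤ) =
      (range (2 * n + 1)).map ⟨fun (m : ℕ) => (m : ℤ) - (n : ℤ), @id (Function.Injective fun (m : ℕ) => (m : ℤ) - (n : ℤ)) (by intro a b h; simpa using h)⟩ := by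
    ext k; simp only [mem_Icc, mem_map, mem_range, Function.Embedding.coeFn_mk]
    constructor
    · intro hk; exact ⟨(k + n).toNat, by omega, by omega⟩
    · rintro ⟨m, hm, rfl⟩; omega
  rw [h1, hmap, sum_map, neg_pow, mul_pow, ← pow_mul, sub_pow]
  simp only [Function.Embedding.coeFn_mk, one_pow, mul_one]
  rw [mul_comm ((-1:ℂ)^n), sum_mul, sum_mul]
  apply sum_congr rfl
  intro m hm
  rw [mem_range] at hm
  have hcC : cC n ((m : ℤ) - n) = (-1:ℝ) ^ (m + n) * ((2*n).choose m : ℕ) := by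
    rw [cC, negone_zpow_sub]
    congr 3
    omega
  have hzpow : s ^ ((m : ℤ) - n) = s ^ m * (s⁻¹) ^ n := by
    rw [zpow_sub₀ hs, zpow_natCast, zpow_natCast, div_eq_mul_inv, inv_pow]
  rw [hcC, hzpow]
  push_cast
  have hneg : ((-1:ℂ)) ^ (m + 2*n) * (-1:ℂ)^n = (-1:ℂ)^(m+n) := by
    rw [← pow_add]
    have h2 : m + 2*n + n = (m + n) + 2*n := by ring
    rw [h2, pow_add, pow_mul]
    norm_num
  calc (-1:ℂ) ^ (m + 2*n) * s ^ m * ((2*n).choose m : ℂ) * (s⁻¹)^n * (-1:ℂ)^n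
      = ((-1:ℂ) ^ (m + 2*n) * (-1:ℂ)^n) * ((2*n).choose m : ℂ) * (s ^ m * (s⁻¹)^n) := by ring
    _ = (-1:ℂ)^(m+n) * ((2*n).choose m : ℂ) * (s ^ m * (s⁻¹)^n) := by rw [hneg]
    _ = _ := by ring


lemma fact_ne (n : ℕ) : ((Nat.factorial n : ℕ) : ℝ) ≠ 0 := by
  exact_mod_cast (Nat.factorial_pos n).ne'

lemma choose_ne (n k : ℕ) (h : k ≤ n) : ((n.choose k : ℕ) : ℝ) ≠ 0 := by
  exact_mod_cast (Nat.choose_pos h).ne'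

lemma bCoef_neg (q : ℕ) (k : ℤ) : bCoef q (-k) = bCoef q k := by
  rcases eq_or_ne k 0 with rfl | hk
  · simp
  · rw [bCoef, bCoef, if_neg (by omega), if_neg hk, negone_zpow_neg]
    have h1 : (q:ℤ) + -k = (q:ℤ) - k := by ring
    have h2 : (q:ℤ) - -k = (q:ℤ) + k := by ring
    rw [h1, h2]
    push_cast
    rw [mul_comm ((((q:ℤ) - k).toNat.factorial : ℝ)) ((((q:ℤ) + k).toNat.factorial : ℝ))]
    ring

lemma cC_neg (n : ℕ) (k : ℤ) (h : k ∈ Icc (-(n:ℤ)) (n:ℤ)) : cC n (-k) = cC n k := by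
  rw [mem_Icc] at h
  rw [cC, cC, negone_zpow_neg]
  congr 2
  have h1 : ((n:ℤ) + -k).toNat = 2*n - ((n:ℤ) + k).toNat := by omega
  rw [h1, Nat.choose_symm (by omega)]

lemma bCoef_succ_nat (q j : ℕ) (hj : j ≤ q + 1) :
    bCoef (q+1) (j:ℤ) =
      (if (j:ℤ) ≤ (q:ℤ) then bCoef q (j:ℤ) else 0) + dC (q+1) * cC (q+1) (j:ℤ) := by
  have hch : (((2*(q+1)).choose (q+1) : ℕ) : ℝ) = ((2*(q+1)).factorial : ℝ) /
      (((q+1).factorial : ℝ) * ((q+1).factorial : ℝ)) := by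
    rw [Nat.cast_choose ℝ (by omega), show 2*(q+1) - (q+1) = q+1 from by omega]
  have hQ : ((q:ℝ)+1) ≠ 0 := by positivity
  rcases Nat.eq_zero_or_pos j with rfl | hj1
  · -- j = 0
    simp only [Nat.cast_zero]
    rw [bCoef, bCoef, if_pos rfl, if_pos rfl, if_pos (by norm_num)]
    rw [Finset.sum_Icc_succ_top (by omega : 1 ≤ q + 1)]
    have hc : cC (q+1) 0 = (((2*(q+1)).choose (q+1) : ℕ) : ℝ) := by
      rw [cC]
      norm_num
    rw [hc, dC, hch]
    have := fact_ne (q+1)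
    have := fact_ne (2*(q+1))
    field_simp
    ring
  rcases eq_or_lt_of_le hj with rfl | hjq
  · -- j = q + 1
    rw [if_neg (by omega)]
    rw [bCoef, if_neg (by exact_mod_cast hj1.ne'), dC, cC]
    have h1 : ((q+1:ℕ):ℤ) + ((q+1:ℕ):ℤ) = ((2*(q+1) : ℕ) : ℤ) := by push_cast; ring
    have h2 : ((q+1:ℕ):ℤ) - ((q+1:ℕ):ℤ) = ((0:ℕ):ℤ) := by ring
    rw [h1, h2, Int.toNat_natCast, Int.toNat_natCast, Nat.choose_self, Nat.factorial_zero]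
    rw [negone_zpow_natCast, hch]
    have := fact_ne (q+1)
    have := fact_ne (2*(q+1))
    push_cast
    field_simp
    ring
  · -- 1 ≤ j ≤ q
    have hjq' : j ≤ q := by omega
    rw [if_pos (by exact_mod_cast hjq')]
    rw [bCoef, bCoef, if_neg (by exact_mod_cast hj1.ne'), if_neg (by exact_mod_cast hj1.ne'),
      dC, cC]
    have t1 : (((q+1:ℕ):ℤ) + (j:ℤ)).toNat = q+1+j := by omega
    have t2 : (((q+1:ℕ):ℤ) - (j:ℤ)).toNat = q+1-j := by omega
    have t3 : ((q:ℤ) + (j:ℤ)).toNat = q+j := by omega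
    have t4 : ((q:ℤ) - (j:ℤ)).toNat = q-j := by omega
    rw [t1, t2, t3, t4, negone_zpow_natCast]
    have hchj : (((2*(q+1)).choose (q+1+j) : ℕ) : ℝ) = ((2*(q+1)).factorial : ℝ) /
        (((q+1+j).factorial : ℝ) * ((q+1-j).factorial : ℝ)) := by
      rw [Nat.cast_choose ℝ (by omega), show 2*(q+1) - (q+1+j) = q+1-j from by omega]
    have e1 : ((q+1+j).factorial : ℝ) = ((q:ℝ)+1+j) * ((q+j).factorial : ℝ) := by
      rw [show q+1+j = (q+j)+1 from by omega, Nat.factorial_succ]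
      push_cast; ring
    have e2 : ((q+1-j).factorial : ℝ) = ((q:ℝ)+1-j) * ((q-j).factorial : ℝ) := by
      rw [show q+1-j = (q-j)+1 from by omega, Nat.factorial_succ]
      have : ((q - j : ℕ) : ℝ) = (q:ℝ) - j := by
        have : ((q - j : ℕ) : ℤ) = (q:ℤ) - j := by omega
        exact_mod_cast congrArg (Int.cast : ℤ → ℝ) this
      push_cast [this]
      ring
    have e3 : ((q+1).factorial : ℝ) = ((q:ℝ)+1) * (q.factorial : ℝ) := by
      rw [Nat.factorial_succ]; push_cast; ring
    have hja : (1:ℝ) ≤ (j:ℝ) := by exact_mod_cast hj1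
    have hj0 : (j:ℝ) ≠ 0 := by positivity
    have hq1j : ((q:ℝ)+1-j) ≠ 0 := by
      have : (j:ℝ) ≤ q := by exact_mod_cast hjq'
      nlinarith
    have hq1jp : ((q:ℝ)+1+j) ≠ 0 := by positivity
    have hA := fact_ne (q+j)
    have hB := fact_ne (q-j)
    have hC := fact_ne q
    have hE := fact_ne (2*(q+1))
    push_cast
    rw [hch, hchj, e1, e2, e3]
    set A := ((q+j).factorial : ℝ) with hAdef
    set B := ((q-j).factorial : ℝ) with hBdef
    set Cq := (q.factorial : ℝ) with hCdef
    set E := ((2*(q+1)).factorial : ℝ) with hEdef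
    field_simp
    ring


lemma bCoef_succ (q : ℕ) (k : ℤ) (hk : k ∈ Icc (-((q:ℤ)+1)) ((q:ℤ)+1)) :
    bCoef (q+1) k = (if k ∈ Icc (-(q:ℤ)) (q:ℤ) then bCoef q k else 0) +
      dC (q+1) * cC (q+1) k := by
  rw [mem_Icc] at hk
  rcases le_or_gt 0 k with h0 | h0
  · lift k to ℕ using h0 with j
    have := bCoef_succ_nat q j (by omega)
    rw [this]
    congr 1
    by_cases hle : (j:ℤ) ≤ (q:ℤ)
    · rw [if_pos hle, if_pos (by rw [mem_Icc]; omega)]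
    · rw [if_neg hle, if_neg (by rw [mem_Icc]; omega)]
  · have hmem : -k ∈ Icc (-((q:ℤ)+1)) ((q:ℤ)+1) := by rw [mem_Icc]; omega
    have hk' : (0:ℤ) ≤ -k := by omega
    have hcC : cC (q+1) k = cC (q+1) (-k) := by
      have := cC_neg (q+1) (-k) (by rw [mem_Icc]; push_cast; omega)
      rw [neg_neg] at this
      exact this
    rw [← bCoef_neg (q+1) k, hcC]
    obtain ⟨j, hj⟩ : ∃ j : ℕ, (j:ℤ) = -k := ⟨(-k).toNat, by omega⟩
    rw [← hj, bCoef_succ_nat q j (by omega)]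
    congr 1
    by_cases hle : (j:ℤ) ≤ (q:ℤ)
    · rw [if_pos hle, if_pos (by rw [mem_Icc]; omega), ← bCoef_neg q k,
        show -k = (j:ℤ) from hj.symm]
    · rw [if_neg hle, if_neg (by rw [mem_Icc]; omega)]


lemma lamInf_eq (q : ℕ) (s : ℂ) (hs : s ≠ 0) :
    lamInf q s = ∑ n ∈ Icc 1 q, ((dC n : ℝ) : ℂ) * (2 - s - s⁻¹) ^ n := by
  induction q with
  | zero => simp [lamInf, bCoef]
  | succ q ih =>
    rw [Finset.sum_Icc_succ_top (by omega : 1 ≤ q + 1), ← ih, lamInf]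
    have hstep : ∀ k ∈ Icc (-((q:ℕ)+1:ℤ)) (((q:ℕ)+1:ℤ)),
        ((bCoef (q+1) k : ℝ) : ℂ) * s ^ k =
          ((if k ∈ Icc (-(q:ℤ)) (q:ℤ) then bCoef q k else 0 : ℝ) : ℂ) * s ^ k +
          ((dC (q+1) * cC (q+1) k : ℝ) : ℂ) * s ^ k := by
      intro k hk
      have hcast : ((q:ℕ)+1 : ℤ) = ((q:ℤ)+1) := by push_cast; ring
      rw [bCoef_succ q k (by rw [← hcast]; exact_mod_cast hk)]
      push_cast
      ring
    have hIcc : Icc (-((q+1:ℕ) : ℤ)) ((q+1:ℕ) : ℤ) = Icc (-((q:ℕ)+1:ℤ)) (((q:ℕ)+1:ℤ)) := by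
      norm_num
    rw [hIcc, sum_congr rfl hstep, sum_add_distrib]
    congr 1
    · -- first sum collapses to lamInf q s
      rw [lamInf]
      rw [← sum_subset (Icc_subset_Icc (by omega) (by omega) :
          Icc (-(q:ℤ)) (q:ℤ) ⊆ Icc (-((q:ℕ)+1:ℤ)) (((q:ℕ)+1:ℤ)))]
      · apply sum_congr rfl
        intro k hk
        rw [if_pos hk]
      · intro k _ hk
        rw [if_neg hk]
        norm_num
    · -- second sum is dC (q+1) * expansion
      rw [expand_pow (q+1) s hs, mul_sum]
      have : Icc (-((q+1:ℕ) : ℤ)) ((q+1:ℕ) : ℤ) = Icc (-((q:ℕ)+1:ℤ)) (((q:ℕ)+1:ℤ)) := hIcc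
      rw [this]
      apply sum_congr rfl
      intro k _
      push_cast
      ring


-- the harmonic value of aCoef at 0
lemma aCoef_zero (l r : ℕ) (hrl : r ≤ l) :
    aCoef l r 0 = ∑ i ∈ Icc (r+1) l, 1 / (i : ℝ) := by
  rw [aCoef, if_pos rfl]
  have hsplit : (Finset.Icc (-(l : ℤ)) (r : ℤ)).erase 0 =
      Finset.Icc (-(l:ℤ)) (-1) ∪ Finset.Icc 1 (r:ℤ) := by
    ext ν
    simp only [mem_erase, mem_Icc, mem_union]
    omega
  have hdisj : Disjoint (Finset.Icc (-(l:ℤ)) (-1)) (Finset.Icc 1 (r:ℤ)) := by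
    rw [Finset.disjoint_left]
    intro a ha hb
    simp only [mem_Icc] at ha hb
    omega
  rw [hsplit, sum_union hdisj]
  have hneg : Finset.Icc (-(l:ℤ)) (-1) = (Finset.Icc 1 (l:ℤ)).map ⟨Neg.neg, neg_injective⟩ := by
    ext ν
    simp only [mem_Icc, mem_map, Function.Embedding.coeFn_mk]
    constructor
    · intro hν; exact ⟨-ν, by omega, by omega⟩
    · rintro ⟨m, hm, rfl⟩; omega
  have hnat : ∀ n : ℕ, Finset.Icc (1:ℤ) (n:ℤ) =
      (Finset.Icc 1 n).map ⟨(Nat.cast : ℕ → ℤ), Nat.cast_injective⟩ := by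
    intro n
    ext ν
    simp only [mem_Icc, mem_map, Function.Embedding.coeFn_mk]
    constructor
    · intro hν; exact ⟨ν.toNat, by omega, by omega⟩
    · rintro ⟨m, hm, rfl⟩; omega
  rw [hneg, sum_map, hnat, hnat, sum_map, sum_map]
  simp only [Function.Embedding.coeFn_mk, Int.cast_neg, Int.cast_natCast]
  have : ∀ m : ℕ, m ∈ Icc 1 l → (1:ℝ) / (-(m:ℝ)) = -(1/(m:ℝ)) := by
    intro m _; ring
  rw [sum_congr rfl this, sum_neg_distrib]
  have hIcc : Icc 1 l = Icc 1 r ∪ Icc (r+1) l := by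
    ext i; simp only [mem_Icc, mem_union]; omega
  have hd2 : Disjoint (Icc 1 r) (Icc (r+1) l) := by
    rw [Finset.disjoint_left]; intro a ha hb
    simp only [mem_Icc] at ha hb; omega
  rw [hIcc, sum_union hd2]
  ring

lemma aCoef_key_nat (l r : ℕ) (h1 : r + 1 ≤ l) (h2 : l ≤ r + 2) (j : ℕ) (hj : j ≤ l) :
    (if (j:ℤ) ≤ (r:ℤ) then aCoef l r (j:ℤ) else 0) +
      (if -(r:ℤ) ≤ (j:ℤ) then aCoef l r (-(j:ℤ)) else 0) = CCa l r * cC l (j:ℤ) := by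
  have hrl : r < l := by omega
  have hfne := fact_ne
  rcases Nat.eq_zero_or_pos j with rfl | hj1
  · -- j = 0 : harmonic case
    simp only [Nat.cast_zero, neg_zero]
    rw [if_pos (by omega), if_pos (by omega), aCoef_zero l r (by omega)]
    have hc : cC l 0 = (((2*l).choose l : ℕ) : ℝ) := by rw [cC]; norm_num
    rw [hc, CCa, Nat.cast_choose ℝ (by omega : l ≤ 2*l), show 2*l - l = l from by omega]
    rcases (by omega : l = r + 1 ∨ l = r + 2) with rfl | rfl
    · rw [Finset.Icc_self, sum_singleton]
      have e3 : (((r+1).factorial : ℕ) : ℝ) = ((r:ℝ)+1) * ((r.factorial : ℕ) : ℝ) := by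
        rw [Nat.factorial_succ]; push_cast; ring
      have e4 : (((2*(r+1)).factorial : ℕ) : ℝ) =
          (2*(r:ℝ)+2) * (((r+1+r).factorial : ℕ) : ℝ) := by
        rw [show 2*(r+1) = (r+1+r)+1 from by omega, Nat.factorial_succ]; push_cast; ring
      rw [e3, e4]
      have := hfne r; have := hfne (r+1+r)
      have hr1 : ((r:ℝ)+1) ≠ 0 := by positivity
      field_simp
      ring
    · rw [show Icc (r+1) (r+2) = {r+1, r+2} from by ext i; simp [mem_Icc, mem_insert]; omega, sum_insert (by simp), sum_singleton]
      have e3 : (((r+2).factorial : ℕ) : ℝ) = ((r:ℝ)+2) * ((r:ℝ)+1) * ((r.factorial : ℕ) : ℝ) := by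
        rw [show r+2 = (r+1)+1 from rfl, Nat.factorial_succ, Nat.factorial_succ]; push_cast; ring
      have e4 : (((2*(r+2)).factorial : ℕ) : ℝ) =
          (2*(r:ℝ)+4) * (2*(r:ℝ)+3) * (((r+2+r).factorial : ℕ) : ℝ) := by
        rw [show 2*(r+2) = ((r+2+r)+1)+1 from by omega, Nat.factorial_succ, Nat.factorial_succ]
        push_cast; ring
      rw [e3, e4]
      have := hfne r; have := hfne (r+2+r)
      have hr1 : ((r:ℝ)+1) ≠ 0 := by positivity
      have hr2 : ((r:ℝ)+2) ≠ 0 := by positivity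
      field_simp
      push_cast
      ring
  · -- j ≥ 1
    have hj0 : ((j:ℤ)) ≠ 0 := by omega
    have hjr0 : (j:ℝ) ≠ 0 := by positivity
    have hcCval : cC l (j:ℤ) = (-1:ℝ)^j * (((2*l).choose (l+j) : ℕ) : ℝ) := by
      have ht : ((l:ℤ)+(j:ℤ)).toNat = l + j := by omega
      rw [cC, ht, negone_zpow_natCast]
    rcases le_or_gt j r with hjr | hjr
    · -- 1 ≤ j ≤ r : both terms present
      rw [if_pos (by exact_mod_cast hjr), if_pos (by omega)]
      rw [aCoef, aCoef, if_neg hj0, if_neg (by omega), hcCval]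
      have t1 : ((l:ℤ) + j).toNat = l + j := by omega
      have t2 : ((r:ℤ) - j).toNat = r - j := by omega
      have t3 : ((l:ℤ) + -(j:ℤ)).toNat = l - j := by omega
      have t4 : ((r:ℤ) - -(j:ℤ)).toNat = r + j := by omega
      rw [t1, t2, t3, t4, negone_zpow_natCast, negone_zpow_neg, negone_zpow_natCast]
      rw [CCa, Nat.cast_choose ℝ (by omega : l + j ≤ 2*l),
        show 2*l - (l+j) = l - j from by omega]
      have hcastj : ((-(j:ℤ) : ℤ) : ℝ) = -(j:ℝ) := by push_cast; ring
      rw [hcastj]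
      rcases (by omega : l = r + 1 ∨ l = r + 2) with rfl | rfl
      · have er1 : (((r+1+j).factorial : ℕ) : ℝ) = ((r:ℝ)+1+j) * (((r+j).factorial : ℕ) : ℝ) := by
          rw [show r+1+j = (r+j)+1 from by omega, Nat.factorial_succ]; push_cast; ring
        have er2 : (((r+1-j).factorial : ℕ) : ℝ) = ((r:ℝ)+1-j) * (((r-j).factorial : ℕ) : ℝ) := by
          rw [show r+1-j = (r-j)+1 from by omega, Nat.factorial_succ]
          have hc : ((r - j : ℕ) : ℝ) = (r:ℝ) - j := by
            have : ((r - j : ℕ) : ℤ) = (r:ℤ) - j := by omega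
            exact_mod_cast congrArg (Int.cast : ℤ → ℝ) this
          push_cast [hc]; ring
        have er3 : (((r+1).factorial : ℕ) : ℝ) = ((r:ℝ)+1) * ((r.factorial : ℕ) : ℝ) := by
          rw [Nat.factorial_succ]; push_cast; ring
        have er4 : (((2*(r+1)).factorial : ℕ) : ℝ) =
            (2*(r:ℝ)+2) * (((r+1+r).factorial : ℕ) : ℝ) := by
          rw [show 2*(r+1) = (r+1+r)+1 from by omega, Nat.factorial_succ]; push_cast; ring
        push_cast
        rw [er1, er2, er3, er4]
        have := hfne (r+j); have := hfne (r-j); have := hfne r; have := hfne (r+1+r)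
        have hd1 : ((r:ℝ)+1-j) ≠ 0 := by
          have : (j:ℝ) ≤ r := by exact_mod_cast hjr
          intro h; linarith
        have hd2 : ((r:ℝ)+1+j) ≠ 0 := by positivity
        have hd3 : ((r:ℝ)+1) ≠ 0 := by positivity
        field_simp
        ring
      · have er1 : (((r+2+j).factorial : ℕ) : ℝ) =
            ((r:ℝ)+2+j) * ((r:ℝ)+1+j) * (((r+j).factorial : ℕ) : ℝ) := by
          rw [show r+2+j = ((r+j)+1)+1 from by omega, Nat.factorial_succ, Nat.factorial_succ]
          push_cast; ring
        have er2 : (((r+2-j).factorial : ℕ) : ℝ) =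
            ((r:ℝ)+2-j) * ((r:ℝ)+1-j) * (((r-j).factorial : ℕ) : ℝ) := by
          rw [show r+2-j = ((r-j)+1)+1 from by omega, Nat.factorial_succ, Nat.factorial_succ]
          have hc : ((r - j : ℕ) : ℝ) = (r:ℝ) - j := by
            have : ((r - j : ℕ) : ℤ) = (r:ℤ) - j := by omega
            exact_mod_cast congrArg (Int.cast : ℤ → ℝ) this
          push_cast [hc]; ring
        have er3 : (((r+2).factorial : ℕ) : ℝ) =
            ((r:ℝ)+2) * ((r:ℝ)+1) * ((r.factorial : ℕ) : ℝ) := by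
          rw [show r+2 = (r+1)+1 from rfl, Nat.factorial_succ, Nat.factorial_succ]
          push_cast; ring
        have er4 : (((2*(r+2)).factorial : ℕ) : ℝ) =
            (2*(r:ℝ)+4) * (2*(r:ℝ)+3) * (((r+2+r).factorial : ℕ) : ℝ) := by
          rw [show 2*(r+2) = ((r+2+r)+1)+1 from by omega, Nat.factorial_succ, Nat.factorial_succ]
          push_cast; ring
        push_cast
        rw [er1, er2, er3, er4]
        have := hfne (r+j); have := hfne (r-j); have := hfne r; have := hfne (r+2+r)
        have hjle : (j:ℝ) ≤ r := by exact_mod_cast hjr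
        have hd1 : ((r:ℝ)+1-j) ≠ 0 := by intro h; linarith
        have hd1' : ((r:ℝ)+2-j) ≠ 0 := by intro h; linarith
        have hd2 : ((r:ℝ)+1+j) ≠ 0 := by positivity
        have hd2' : ((r:ℝ)+2+j) ≠ 0 := by positivity
        have hd3 : ((r:ℝ)+1) ≠ 0 := by positivity
        have hd3' : ((r:ℝ)+2) ≠ 0 := by positivity
        field_simp
        ring
    · -- r < j ≤ l : only second term
      rw [if_neg (by omega), if_pos (by omega), zero_add]
      rw [aCoef, if_neg (by omega), hcCval]
      have t3 : ((l:ℤ) + -(j:ℤ)).toNat = l - j := by omega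
      have t4 : ((r:ℤ) - -(j:ℤ)).toNat = r + j := by omega
      rw [t3, t4, negone_zpow_neg, negone_zpow_natCast]
      rw [CCa, Nat.cast_choose ℝ (by omega : l + j ≤ 2*l),
        show 2*l - (l+j) = l - j from by omega]
      have hcastj : ((-(j:ℤ) : ℤ) : ℝ) = -(j:ℝ) := by push_cast; ring
      rw [hcastj, div_neg, neg_neg]
      rcases (by omega : (l = r+1 ∧ j = r+1) ∨ (l = r+2 ∧ j = r+2) ∨ (l = r+2 ∧ j = r+1))
        with ⟨rfl, rfl⟩ | ⟨rfl, rfl⟩ | ⟨rfl, rfl⟩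
      · -- l = r+1, j = r+1
        rw [show r+1-(r+1) = 0 from by omega, Nat.factorial_zero]
        have ea : ((((r+1)+(r+1)).factorial : ℕ) : ℝ) =
            (2*(r:ℝ)+2) * (((r+(r+1)).factorial : ℕ) : ℝ) := by
          rw [show (r+1)+(r+1) = (r+(r+1))+1 from by omega, Nat.factorial_succ]; push_cast; ring
        have eb : (((2*(r+1)).factorial : ℕ) : ℝ) =
            (2*(r:ℝ)+2) * (((r+(r+1)).factorial : ℕ) : ℝ) := by
          rw [show 2*(r+1) = (r+(r+1))+1 from by omega, Nat.factorial_succ]; push_cast; ring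
        have ec : ((((r+1)+r).factorial : ℕ) : ℝ) = (((r+(r+1)).factorial : ℕ) : ℝ) := by
          congr 2; omega
        have ed : (((r+1).factorial : ℕ) : ℝ) = ((r:ℝ)+1) * ((r.factorial : ℕ) : ℝ) := by
          rw [Nat.factorial_succ]; push_cast; ring
        push_cast
        rw [ea, eb, ec, ed]
        have := hfne (r+(r+1)); have := hfne r
        have hd3 : ((r:ℝ)+1) ≠ 0 := by positivity
        field_simp
      · -- l = r+2, j = r+2
        rw [show r+2-(r+2) = 0 from by omega, Nat.factorial_zero]
        have ea : ((((r+2)+(r+2)).factorial : ℕ) : ℝ) =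
            (2*(r:ℝ)+4) * (2*(r:ℝ)+3) * (((r+(r+2)).factorial : ℕ) : ℝ) := by
          rw [show (r+2)+(r+2) = ((r+(r+2))+1)+1 from by omega, Nat.factorial_succ,
            Nat.factorial_succ]
          push_cast; ring
        have eb : (((2*(r+2)).factorial : ℕ) : ℝ) =
            (2*(r:ℝ)+4) * (2*(r:ℝ)+3) * (((r+(r+2)).factorial : ℕ) : ℝ) := by
          rw [show 2*(r+2) = ((r+(r+2))+1)+1 from by omega, Nat.factorial_succ,
            Nat.factorial_succ]
          push_cast; ring
        have ec : ((((r+2)+r).factorial : ℕ) : ℝ) = (((r+(r+2)).factorial : ℕ) : ℝ) := by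
          congr 2; omega
        have ed : (((r+2).factorial : ℕ) : ℝ) =
            ((r:ℝ)+2) * ((r:ℝ)+1) * ((r.factorial : ℕ) : ℝ) := by
          rw [show r+2 = (r+1)+1 from rfl, Nat.factorial_succ, Nat.factorial_succ]
          push_cast; ring
        push_cast
        rw [ea, eb, ec, ed]
        have := hfne (r+(r+2)); have := hfne r
        have hd3 : ((r:ℝ)+1) ≠ 0 := by positivity
        have hd4 : ((r:ℝ)+2) ≠ 0 := by positivity
        have hd5 : (2*(r:ℝ)+3) ≠ 0 := by positivity
        field_simp
      · -- l = r+2, j = r+1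
        rw [show r+2-(r+1) = 1 from by omega, Nat.factorial_one]
        have ea : ((((r+2)+(r+1)).factorial : ℕ) : ℝ) =
            (2*(r:ℝ)+3) * (2*(r:ℝ)+2) * (((r+(r+1)).factorial : ℕ) : ℝ) := by
          rw [show (r+2)+(r+1) = ((r+(r+1))+1)+1 from by omega, Nat.factorial_succ,
            Nat.factorial_succ]
          push_cast; ring
        have eb : (((2*(r+2)).factorial : ℕ) : ℝ) =
            (2*(r:ℝ)+4) * (2*(r:ℝ)+3) * (2*(r:ℝ)+2) * (((r+(r+1)).factorial : ℕ) : ℝ) := by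
          rw [show 2*(r+2) = (((r+(r+1))+1)+1)+1 from by omega, Nat.factorial_succ,
            Nat.factorial_succ, Nat.factorial_succ]
          push_cast; ring
        have ec : ((((r+2)+r).factorial : ℕ) : ℝ) =
            (2*(r:ℝ)+2) * (((r+(r+1)).factorial : ℕ) : ℝ) := by
          rw [show (r+2)+r = (r+(r+1))+1 from by omega, Nat.factorial_succ]; push_cast; ring
        have ed : (((r+2).factorial : ℕ) : ℝ) =
            ((r:ℝ)+2) * ((r:ℝ)+1) * ((r.factorial : ℕ) : ℝ) := by
          rw [show r+2 = (r+1)+1 from rfl, Nat.factorial_succ, Nat.factorial_succ]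
          push_cast; ring
        push_cast
        rw [ea, eb, ec, ed]
        have := hfne (r+(r+1)); have := hfne r
        have hd3 : ((r:ℝ)+1) ≠ 0 := by positivity
        have hd4 : ((r:ℝ)+2) ≠ 0 := by positivity
        have hd5 : (2*(r:ℝ)+3) ≠ 0 := by positivity
        field_simp
        ring


lemma aCoef_key (l r : ℕ) (h1 : r + 1 ≤ l) (h2 : l ≤ r + 2) (k : ℤ)
    (hk : k ∈ Icc (-(l:ℤ)) (l:ℤ)) :
    (if k ≤ (r:ℤ) then aCoef l r k else 0) +
      (if -(r:ℤ) ≤ k then aCoef l r (-k) else 0) = CCa l r * cC l k := by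
  rw [mem_Icc] at hk
  rcases le_or_gt 0 k with h0 | h0
  · lift k to ℕ using h0 with j
    exact aCoef_key_nat l r h1 h2 j (by omega)
  · obtain ⟨j, hj⟩ : ∃ j : ℕ, (j:ℤ) = -k := ⟨(-k).toNat, by omega⟩
    have hkey := aCoef_key_nat l r h1 h2 j (by omega)
    rw [if_pos (by omega : -(r:ℤ) ≤ (j:ℤ))] at hkey
    have hcc : cC l k = cC l (j:ℤ) := by
      have := cC_neg l (j:ℤ) (by rw [mem_Icc]; omega)
      rw [show -(j:ℤ) = k from by omega] at this
      exact this
    rw [hcc, ← hkey]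
    rw [if_pos (by omega : k ≤ (r:ℤ)), show -k = (j:ℤ) from by omega]
    by_cases hc : (j:ℤ) ≤ (r:ℤ)
    · rw [if_pos hc, if_pos (by omega), show (k:ℤ) = -(j:ℤ) from by omega]
      ring
    · rw [if_neg hc, if_neg (by omega), show (k:ℤ) = -(j:ℤ) from by omega]
      ring


lemma aSym_add (l r : ℕ) (h1 : r + 1 ≤ l) (h2 : l ≤ r + 2) (s : ℂ) (hs : s ≠ 0) :
    aSym l r s + aSym l r s⁻¹ = ((CCa l r : ℝ) : ℂ) * (2 - s - s⁻¹) ^ l := by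
  have hneg : Finset.Icc (-(l:ℤ)) (r:ℤ) = (Finset.Icc (-(r:ℤ)) (l:ℤ)).map
      ⟨Neg.neg, neg_injective⟩ := by
    ext ν
    simp only [mem_Icc, mem_map, Function.Embedding.coeFn_mk]
    constructor
    · intro hν; exact ⟨-ν, by omega, by omega⟩
    · rintro ⟨m, hm, rfl⟩; omega
  have e0 : aSym l r s⁻¹ = ∑ k ∈ Icc (-(r:ℤ)) (l:ℤ), ((aCoef l r (-k) : ℝ) : ℂ) * s ^ k := by
    rw [aSym, hneg, sum_map]
    apply sum_congr rfl
    intro k _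
    simp only [Function.Embedding.coeFn_mk]
    rw [zpow_neg, ← inv_zpow, inv_inv]
  have hsub1 : Icc (-(l:ℤ)) (r:ℤ) ⊆ Icc (-(l:ℤ)) (l:ℤ) := Icc_subset_Icc (by omega) (by omega)
  have hsub2 : Icc (-(r:ℤ)) (l:ℤ) ⊆ Icc (-(l:ℤ)) (l:ℤ) := Icc_subset_Icc (by omega) (by omega)
  have e1 : aSym l r s =
      ∑ k ∈ Icc (-(l:ℤ)) (l:ℤ), ((if k ≤ (r:ℤ) then aCoef l r k else 0 : ℝ) : ℂ) * s ^ k := by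
    rw [aSym, ← sum_subset hsub1]
    · apply sum_congr rfl
      intro k hk
      rw [mem_Icc] at hk
      rw [if_pos (by omega)]
    · intro k hk' hk
      rw [mem_Icc] at hk'
      simp only [mem_Icc, not_and, not_le] at hk
      rw [if_neg (by omega)]
      norm_num
  have e2 : aSym l r s⁻¹ =
      ∑ k ∈ Icc (-(l:ℤ)) (l:ℤ), ((if -(r:ℤ) ≤ k then aCoef l r (-k) else 0 : ℝ) : ℂ) * s ^ k := by
    rw [e0, ← sum_subset hsub2]
    · apply sum_congr rfl
      intro k hk
      rw [mem_Icc] at hk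
      rw [if_pos (by omega)]
    · intro k hk' hk
      rw [mem_Icc] at hk'
      simp only [mem_Icc, not_and, not_le] at hk
      rw [if_neg (by omega)]
      norm_num
  rw [e1, e2, ← sum_add_distrib, expand_pow l s hs, mul_sum]
  apply sum_congr rfl
  intro k hk
  have := aCoef_key l r h1 h2 k hk
  calc ((if k ≤ (r:ℤ) then aCoef l r k else 0 : ℝ) : ℂ) * s ^ k +
        ((if -(r:ℤ) ≤ k then aCoef l r (-k) else 0 : ℝ) : ℂ) * s ^ k
      = (((if k ≤ (r:ℤ) then aCoef l r k else 0) +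
          (if -(r:ℤ) ≤ k then aCoef l r (-k) else 0) : ℝ) : ℂ) * s ^ k := by push_cast; ring
    _ = ((CCa l r * cC l k : ℝ) : ℂ) * s ^ k := by rw [this]
    _ = _ := by push_cast; ring


section Assembly

variable (θ : ℝ)

lemma exp_theta_ne : Complex.exp ((θ:ℂ) * Complex.I) ≠ 0 := Complex.exp_ne_zero _

lemma exp_theta_inv :
    (Complex.exp ((θ:ℂ) * Complex.I))⁻¹ = Complex.exp (((-θ : ℝ):ℂ) * Complex.I) := by
  rw [← Complex.exp_neg]
  push_cast
  ring_nf

lemma two_sub_key :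
    2 - Complex.exp ((θ:ℂ) * Complex.I) - (Complex.exp ((θ:ℂ) * Complex.I))⁻¹ =
      (((2 - 2 * Real.cos θ : ℝ)) : ℂ) := by
  rw [exp_theta_inv, Complex.exp_mul_I, Complex.exp_mul_I, Complex.ofReal_neg,
    Complex.cos_neg, Complex.sin_neg, Complex.ofReal_sub, Complex.ofReal_mul,
    Complex.ofReal_ofNat, Complex.ofReal_cos]
  ring

lemma zpow_exp (k : ℤ) :
    (Complex.exp ((θ:ℂ) * Complex.I)) ^ k = Complex.exp (((k * θ : ℝ):ℂ) * Complex.I) := by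
  rw [← Complex.exp_int_mul]
  congr 1
  push_cast
  ring

lemma aSym_re (l r : ℕ) :
    (aSym l r (Complex.exp ((θ:ℂ) * Complex.I))).re =
      ∑ k ∈ Finset.Icc (-(l : ℤ)) (r : ℤ), aCoef l r k * Real.cos (k * θ) := by
  rw [aSym, Complex.re_sum]
  apply sum_congr rfl
  intro k _
  rw [zpow_exp]
  simp only [Complex.mul_re, Complex.ofReal_re, Complex.ofReal_im,
    Complex.exp_ofReal_mul_I_re, Complex.exp_ofReal_mul_I_im, zero_mul, sub_zero]

lemma aSym_im (l r : ℕ) :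
    (aSym l r (Complex.exp ((θ:ℂ) * Complex.I))).im =
      ∑ k ∈ Finset.Icc (-(l : ℤ)) (r : ℤ), aCoef l r k * Real.sin (k * θ) := by
  rw [aSym, Complex.im_sum]
  apply sum_congr rfl
  intro k _
  rw [zpow_exp]
  simp only [Complex.mul_im, Complex.ofReal_re, Complex.ofReal_im,
    Complex.exp_ofReal_mul_I_re, Complex.exp_ofReal_mul_I_im, zero_mul, add_zero]

-- nonnegativity of the real part of aSym
lemma aSym_re_nonneg (l r : ℕ) (h1 : r + 1 ≤ l) (h2 : l ≤ r + 2) :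
    0 ≤ (aSym l r (Complex.exp ((θ:ℂ) * Complex.I))).re := by
  set s := Complex.exp ((θ:ℂ) * Complex.I) with hs
  have key := aSym_add l r h1 h2 s (exp_theta_ne θ)
  have hre : (aSym l r s⁻¹).re = (aSym l r s).re := by
    rw [hs, exp_theta_inv, aSym_re, aSym_re]
    apply sum_congr rfl
    intro k _
    rw [show (k:ℝ) * -θ = -(k * θ) from by ring, Real.cos_neg]
  have hx : (0:ℝ) ≤ 2 - 2 * Real.cos θ := by
    have := Real.cos_le_one θ
    linarith
  have hCCa : 0 ≤ CCa l r := by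
    rw [CCa]
    positivity
  have hre2 : (aSym l r s).re + (aSym l r s⁻¹).re = CCa l r * (2 - 2*Real.cos θ)^l := by
    have := congrArg Complex.re key
    rw [Complex.add_re] at this
    rw [this, two_sub_key]
    have : (((CCa l r : ℝ)) : ℂ) * (((2 - 2 * Real.cos θ : ℝ)) : ℂ) ^ l =
        (((CCa l r * (2 - 2*Real.cos θ)^l : ℝ)) : ℂ) := by push_cast; ring
    rw [this, Complex.ofReal_re]
  rw [hre] at hre2
  nlinarith [pow_nonneg hx l]

-- upper bound for the real part of lamInf
lemma lamInf_re_le (q : ℕ) (hq : 1 ≤ q) :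
    (lamInf q (Complex.exp ((θ:ℂ) * Complex.I))).re ≤ -(2 - 2 * Real.cos θ) := by
  set s := Complex.exp ((θ:ℂ) * Complex.I) with hs
  set x := 2 - 2 * Real.cos θ with hxdef
  have hx : (0:ℝ) ≤ x := by
    have := Real.cos_le_one θ
    rw [hxdef]; linarith
  have key := lamInf_eq q s (exp_theta_ne θ)
  rw [hs] at key
  rw [two_sub_key] at key
  rw [← hs, ← hxdef] at key
  have : lamInf q s = (((∑ n ∈ Icc 1 q, dC n * x ^ n : ℝ)) : ℂ) := by
    rw [key]
    push_cast
    ring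
  rw [this, Complex.ofReal_re]
  have hsplit : Icc 1 q = insert 1 (Icc 2 q) := by
    ext i; simp [mem_Icc, mem_insert]; omega
  rw [hsplit, sum_insert (by simp)]
  have hd1 : dC 1 = -1 := by
    rw [dC]
    norm_num
  have hrest : ∑ n ∈ Icc 2 q, dC n * x ^ n ≤ 0 := by
    apply sum_nonpos
    intro n _
    have hdn : dC n ≤ 0 := by
      rw [dC]
      have : (0:ℝ) ≤ 2 / ((n:ℝ)^2 * (((2*n).choose n : ℕ) : ℝ)) := by positivity
      linarith
    have := pow_nonneg hx n
    exact mul_nonpos_of_nonpos_of_nonneg hdn this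
  rw [hd1]
  nlinarith

-- bound for the imaginary part of aSym
noncomputable def Abd (l r : ℕ) : ℝ :=
  1 + ∑ k ∈ Finset.Icc (-(l : ℤ)) (r : ℤ), |aCoef l r k| * (2 * |(k:ℝ)|)

lemma Abd_ge_one (l r : ℕ) : 1 ≤ Abd l r := by
  rw [Abd]
  have : (0:ℝ) ≤ ∑ k ∈ Finset.Icc (-(l : ℤ)) (r : ℤ), |aCoef l r k| * (2 * |(k:ℝ)|) := by
    apply sum_nonneg
    intro k _
    positivity
  linarith

lemma aSym_im_sq_le (l r : ℕ) :
    (aSym l r (Complex.exp ((θ:ℂ) * Complex.I))).im ^ 2 ≤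
      (Abd l r)^2 * (2 - 2 * Real.cos θ) / 4 := by
  have hsin2 : Real.sin (θ/2) ^ 2 = (2 - 2 * Real.cos θ) / 4 := by
    have h1 := Real.sin_sq_add_cos_sq (θ/2)
    have h2 := Real.cos_two_mul (θ/2)
    rw [show 2 * (θ/2) = θ from by ring] at h2
    nlinarith
  have habs : |(aSym l r (Complex.exp ((θ:ℂ) * Complex.I))).im| ≤ Abd l r * |Real.sin (θ/2)| := by
    rw [aSym_im]
    calc |∑ k ∈ Finset.Icc (-(l : ℤ)) (r : ℤ), aCoef l r k * Real.sin (k * θ)|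
        ≤ ∑ k ∈ Finset.Icc (-(l : ℤ)) (r : ℤ), |aCoef l r k * Real.sin (k * θ)| :=
          abs_sum_le_sum_abs _ _
      _ ≤ ∑ k ∈ Finset.Icc (-(l : ℤ)) (r : ℤ), |aCoef l r k| * (2 * |(k:ℝ)|) * |Real.sin (θ/2)| := by
          apply sum_le_sum
          intro k _
          rw [abs_mul]
          have hsk : |Real.sin (k * θ)| ≤ 2 * |(k:ℝ)| * |Real.sin (θ/2)| := by
            have := abs_sin_int_mul_le (2*k) (θ/2)
            rw [show ((2*k : ℤ):ℝ) * (θ/2) = k * θ from by push_cast; ring] at this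
            rw [show |((2*k : ℤ):ℝ)| = 2 * |(k:ℝ)| from by push_cast [abs_mul]; norm_num] at this
            linarith
          calc |aCoef l r k| * |Real.sin (k * θ)|
              ≤ |aCoef l r k| * (2 * |(k:ℝ)| * |Real.sin (θ/2)|) := by
                apply mul_le_mul_of_nonneg_left hsk (abs_nonneg _)
            _ = |aCoef l r k| * (2 * |(k:ℝ)|) * |Real.sin (θ/2)| := by ring
      _ = (∑ k ∈ Finset.Icc (-(l : ℤ)) (r : ℤ), |aCoef l r k| * (2 * |(k:ℝ)|)) *
            |Real.sin (θ/2)| := by rw [sum_mul]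
      _ ≤ Abd l r * |Real.sin (θ/2)| := by
          apply mul_le_mul_of_nonneg_right _ (abs_nonneg _)
          rw [Abd]
          linarith
  have h1 : (aSym l r (Complex.exp ((θ:ℂ) * Complex.I))).im ^ 2 ≤
      (Abd l r * |Real.sin (θ/2)|)^2 := by
    rw [← sq_abs]
    apply pow_le_pow_left₀ (abs_nonneg _) habs
  calc (aSym l r (Complex.exp ((θ:ℂ) * Complex.I))).im ^ 2
      ≤ (Abd l r * |Real.sin (θ/2)|)^2 := h1
    _ = (Abd l r)^2 * Real.sin (θ/2)^2 := by rw [mul_pow, sq_abs]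
    _ = (Abd l r)^2 * ((2 - 2 * Real.cos θ) / 4) := by rw [hsin2]
    _ = (Abd l r)^2 * (2 - 2 * Real.cos θ) / 4 := by ring

end Assembly


end Helpers

/-- Global bound on the eigenvalue trajectory of the semi-discretized partially
dissipative wave system with a symmetric pair of upwind/downwind discretizations:
every eigenvalue `λ = ½(R·x_∞(θ) - 2·x₀⁻(θ) + w)`, where
`w² = R²·x_∞(θ)² - 4·y₀⁻(θ)²`, satisfies `Re λ ≤ -R·L·(Im λ)²` for a constant
`L > 0` depending only on the spatial discretizations. -/
theorem wave_symmetric_global_bound (l r : ℕ) (h1 : r + 1 ≤ l) (h2 : l ≤ r + 2)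
    (q : ℕ) (hq : 1 ≤ q) :
    ∃ L > (0 : ℝ), ∀ R : ℝ, 0 < R → ∀ θ ∈ Set.Icc (-Real.pi) Real.pi,
      ∀ w lam : ℂ,
        w ^ 2 = (((R * (lamInf q (Complex.exp (θ * Complex.I))).re : ℝ)) : ℂ) ^ 2 -
          4 * (((aSym l r (Complex.exp (θ * Complex.I))).im : ℂ)) ^ 2 →
        lam = ((1 : ℂ) / 2) *
          (((R * (lamInf q (Complex.exp (θ * Complex.I))).re -
              2 * (aSym l r (Complex.exp (θ * Complex.I))).re : ℝ) : ℂ) + w) →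
        lam.re ≤ -(R * L * lam.im ^ 2) := by
  refine ⟨2 / (Abd l r)^2, by have := Abd_ge_one l r; positivity, ?_⟩
  intro R hR θ hθ w lam hw hlam
  set s := Complex.exp ((θ:ℂ) * Complex.I) with hs
  set X := (aSym l r s).re with hX
  set Y := (aSym l r s).im with hY
  set Xinf := (lamInf q s).re with hXinf
  set x := 2 - 2 * Real.cos θ with hxdef
  set A := Abd l r with hA
  have hA1 : (1:ℝ) ≤ A := Abd_ge_one l r
  have hA0 : (0:ℝ) < A := by linarith
  have hxpos : (0:ℝ) ≤ x := by
    have := Real.cos_le_one θ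
    rw [hxdef]; linarith
  have hXpos : 0 ≤ X := aSym_re_nonneg θ l r h1 h2
  have hXinfle : Xinf ≤ -x := lamInf_re_le θ q hq
  have hYsq : Y^2 ≤ A^2 * x / 4 := aSym_im_sq_le θ l r
  -- decompose lam
  have hlamre : lam.re = (R * Xinf - 2 * X + w.re) / 2 := by
    rw [hlam]
    simp [Complex.mul_re, Complex.add_re, Complex.add_im, Complex.ofReal_re, Complex.ofReal_im]
    ring
  have hlamim : lam.im = w.im / 2 := by
    rw [hlam]
    simp [Complex.mul_im, Complex.add_re, Complex.add_im, Complex.ofReal_re, Complex.ofReal_im]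
    ring
  -- decompose hw
  rw [sq] at hw
  have hwre : w.re * w.re - w.im * w.im = (R * Xinf)^2 - 4 * Y^2 := by
    have := congrArg Complex.re hw
    simpa [Complex.mul_re, Complex.sub_re, Complex.ofReal_re, Complex.ofReal_im, pow_two] using this
  have hwim : w.re * w.im + w.im * w.re = 0 := by
    have := congrArg Complex.im hw
    simpa [Complex.mul_im, Complex.sub_im, Complex.ofReal_re, Complex.ofReal_im, pow_two] using this
  have hcases : w.re = 0 ∨ w.im = 0 := by
    rcases mul_eq_zero.mp (by linarith : w.re * w.im = 0) with h | h
    · left; exact h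
    · right; exact h
  have hRXinf : R * Xinf ≤ 0 := by
    have : Xinf ≤ 0 := by linarith
    exact mul_nonpos_of_nonneg_of_nonpos hR.le this
  rcases hcases with hwre0 | hwim0
  · -- w purely imaginary
    rw [hlamre, hlamim, hwre0]
    have hwim2 : w.im * w.im = 4 * Y^2 - (R * Xinf)^2 := by nlinarith [hwre]
    have him2 : (w.im / 2)^2 ≤ Y^2 := by nlinarith [sq_nonneg (R * Xinf)]
    have hYx : (2 / A^2) * Y^2 ≤ x / 2 := by
      have h4 : (0:ℝ) < A^2 := by positivity
      rw [div_mul_eq_mul_div, div_le_div_iff₀ h4 (by norm_num : (0:ℝ) < 2)] at *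
      nlinarith
    have hchain : R * (2 / A^2) * (w.im / 2)^2 ≤ R * (x/2) := by
      have hstep : (2 / A^2) * (w.im / 2)^2 ≤ x / 2 := by
        have : (2 / A^2) * (w.im / 2)^2 ≤ (2 / A^2) * Y^2 := by
          apply mul_le_mul_of_nonneg_left him2 (by positivity)
        linarith
      nlinarith
    have hre_le : (R * Xinf - 2 * X + 0) / 2 ≤ R * Xinf / 2 := by linarith
    have : R * Xinf / 2 ≤ -(R * (x/2)) := by nlinarith
    linarith
  · -- w real
    rw [hlamre, hlamim, hwim0]
    norm_num
    have hwresq : w.re * w.re ≤ (R * Xinf)^2 := by nlinarith [hwre, sq_nonneg Y]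
    have hwrele : w.re ≤ -(R * Xinf) := by nlinarith [sq_nonneg (w.re + R * Xinf)]
    linarith
end
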